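/- arXiv:2104.11758 — 2 statements merged into one kernel-verified Lean document; each statement's English description precedes it below -/
import Mathlib

section
/- Let T be an observation table and (≡,f) a merging map on T of minimal size, with resulting transducer M. If there exist an open completion M' of (≡,f) and a word u∈Up such that u∈dom(⟦M'⟧) and the run of u in M' uses a muted or open transition, then there exist two transducers M1 and M2 compatible with T, each having the minimal number of states among transducers compatible with T, such that ⟦M1⟧|_Up ≠ ⟦M2⟧|_Up (i.e., there exist competing minimal transducers compatible with T). -/
attribute [local instance] Classical.propDecidable

/-- A subsequential string transducer with input alphabet `σ` and output alphabet `γ`. -/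
structure Transducer (σ : Type) (γ : Type) : Type 1 where
  Q : Type
  fin : Finite Q
  q0 : Q
  w0 : List γ
  δ : Q → σ → Option (Q × List γ)
  δF : Q → Option (List γ)

namespace Transducer

variable {σ γ : Type}

/-- The run relation `q →*^{u|w} q'`, as a function: from state `q`, reading `u`,
we reach the returned state producing the returned (concatenated) output. -/
def runFrom (M : Transducer σ γ) : M.Q → List σ → Option (M.Q × List γ)
  | q, [] => some (q, [])
  | q, a :: u =>
    (M.δ q a).bind fun x =>
      (M.runFrom x.1 u).map fun y => (y.1, x.2 ++ y.2)

/-- The semantics `⟦M⟧` of a transducer, as a partial function `Σ* → Γ*`. -/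
def sem (M : Transducer σ γ) (u : List σ) : Option (List γ) :=
  (M.runFrom M.q0 u).bind fun x => (M.δF x.1).map fun w' => M.w0 ++ x.2 ++ w'

/-- The number of states `|M|` of a transducer. -/
noncomputable def size (M : Transducer σ γ) : ℕ := Nat.card M.Q

/-- The run of `v` in `M` (from the initial state) uses the transition out of
state `q` reading letter `a`. -/
def usesTransition (M : Transducer σ γ) (q : M.Q) (a : σ) (v : List σ) : Prop :=
  ∃ (vp vs : List σ) (w : List γ), v = vp ++ a :: vs ∧ M.runFrom M.q0 vp = some (q, w)

/-- Modify the transition function of `M` at `(q, a)`: replace it by `o`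
(`o = none` deletes the transition, `o = some (q', w)` makes it `q →^{a|w} q'`). -/
noncomputable def modifyDelta (M : Transducer σ γ) (q : M.Q) (a : σ)
    (o : Option (M.Q × List γ)) : Transducer σ γ :=
  { M with δ := fun p b => if p = q ∧ b = a then o else M.δ p b }

/-- The product transducer `M × A` of a transducer and a DFA. -/
noncomputable def prodDFA {Q : Type} [Finite Q] (M : Transducer σ γ) (A : DFA σ Q) :
    Transducer σ γ where
  Q := M.Q × Q
  fin := by have := M.fin; infer_instance
  q0 := (M.q0, A.start)
  w0 := M.w0
  δ := fun qp a => (M.δ qp.1 a).map fun x => ((x.1, A.step qp.2 a), x.2)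
  δF := fun qp => if qp.2 ∈ A.accept then M.δF qp.1 else none

end Transducer

/-- A table entry: a word of `Γ*`, the wildcard `#`, or `⊥`. -/
inductive TVal (γ : Type) : Type where
  | word : List γ → TVal γ
  | hash : TVal γ
  | bot  : TVal γ

/-- An observation table for a target partial function `τ` with regular domain
upper bound `Up`, based on a finite prefix-closed set `P` and a finite
suffix-closed set `S` (both containing `ε`). -/
structure ObsTable (σ γ : Type) where
  P : Finset (List σ)
  S : Finset (List σ)
  eps_mem_P : ([] : List σ) ∈ P
  eps_mem_S : ([] : List σ) ∈ S
  prefixClosed : ∀ u ∈ P, ∀ v : List σ, v <+: u → v ∈ P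
  suffixClosed : ∀ u ∈ S, ∀ v : List σ, v <:+ u → v ∈ S
  Up : Language σ
  regular : ∃ (n : ℕ) (A : DFA σ (Fin n)), A.accepts = Up
  τ : List σ → Option (List γ)
  dom_subset : ∀ u : List σ, (τ u).isSome → u ∈ Up

namespace ObsTable

variable {σ γ : Type}

/-- The set `P ∪ PΣ`. -/
def rowIdx (T : ObsTable σ γ) : Set (List σ) :=
  ↑T.P ∪ {x | ∃ p ∈ T.P, ∃ a : σ, x = p ++ [a]}

/-- The set `(P ∪ PΣ)·S` on which the table is defined. -/
def rows (T : ObsTable σ γ) : Set (List σ) :=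
  {x | ∃ u ∈ T.rowIdx, ∃ v ∈ T.S, x = u ++ v}

/-- The table entry at `x`: `#` if `x ∉ Up`, `⊥` if `x ∈ Up ∖ dom τ`, and `τ x` otherwise. -/
noncomputable def val (T : ObsTable σ γ) (x : List σ) : TVal γ :=
  if x ∈ T.Up then
    match T.τ x with
    | some w => TVal.word w
    | none => TVal.bot
  else TVal.hash

/-- `P_T`: the set of prefixes of elements of `(P ∪ PΣ)·S`. -/
def PT (T : ObsTable σ γ) : Set (List σ) := {u | ∃ x ∈ T.rows, u <+: x}

/-- `P_Γ`: those `u ∈ P_T` having an extension whose table entry is a word of `Γ*`. -/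
def PGamma (T : ObsTable σ γ) : Set (List σ) :=
  {u | u ∈ T.PT ∧ ∃ v : List σ, u ++ v ∈ T.rows ∧ ∃ w, T.val (u ++ v) = TVal.word w}

/-- A transducer `M` is compatible with the table `T`. -/
def Compatible (T : ObsTable σ γ) (M : Transducer σ γ) : Prop :=
  ∀ x ∈ T.rows,
    (∀ w, T.val x = TVal.word w → M.sem x = some w) ∧
    (T.val x = TVal.bot → M.sem x = none)

lemma rowIdx_finite [Finite σ] (T : ObsTable σ γ) : T.rowIdx.Finite := by
  refine Set.Finite.union T.P.finite_toSet ?_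
  have h : {x : List σ | ∃ p ∈ T.P, ∃ a : σ, x = p ++ [a]}
      ⊆ (fun pa : List σ × σ => pa.1 ++ [pa.2]) '' ((↑T.P : Set (List σ)) ×ˢ (Set.univ : Set σ)) := by
    rintro x ⟨p, hp, a, rfl⟩
    exact ⟨(p, a), ⟨hp, trivial⟩, rfl⟩
  exact ((T.P.finite_toSet.prod Set.finite_univ).image _).subset h

lemma rows_finite [Finite σ] (T : ObsTable σ γ) : T.rows.Finite := by
  have h : T.rows ⊆ (fun uv : List σ × List σ => uv.1 ++ uv.2) '' (T.rowIdx ×ˢ (↑T.S : Set (List σ))) := by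
    rintro x ⟨u, hu, v, hv, rfl⟩
    exact ⟨(u, v), ⟨hu, hv⟩, rfl⟩
  exact (((rowIdx_finite T).prod T.S.finite_toSet).image _).subset h

lemma PT_finite [Finite σ] (T : ObsTable σ γ) : T.PT.Finite := by
  have h : T.PT ⊆ ⋃ x ∈ T.rows, {u : List σ | u ∈ x.inits} := by
    rintro u ⟨x, hx, hpre⟩
    exact Set.mem_biUnion hx (by simpa [List.mem_inits] using hpre)
  refine (Set.Finite.biUnion (rows_finite T) fun x _ => ?_).subset h
  exact x.inits.finite_toSet

end ObsTable

/-- A merging map `(≡, f)` on an observation table `T`. -/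
structure MergingMap {σ γ : Type} (T : ObsTable σ γ) where
  rel : List σ → List σ → Prop
  f : List σ → Option (List γ)
  rel_mem : ∀ u v : List σ, rel u v → u ∈ T.PT ∧ v ∈ T.PT
  rel_refl : ∀ u ∈ T.PT, rel u u
  rel_symm : ∀ {u v : List σ}, rel u v → rel v u
  rel_trans : ∀ {u v w : List σ}, rel u v → rel v w → rel u w
  f_mem : ∀ u : List σ, (f u).isSome → u ∈ T.PT
  cond1 : ∀ u v : List σ, f u = none → rel u v → f v = none
  cond2 : ∀ (u v : List σ) (w : List γ), u ∈ T.PT → u ++ v ∈ T.rows →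
    T.val (u ++ v) = TVal.word w → ∃ x, f u = some x ∧ x <+: w
  cond3 : ∀ (u : List σ) (a : σ) (w : List γ), f (u ++ [a]) = some w →
    ∃ x, f u = some x ∧ x <+: w
  cond4 : ∀ (u u' : List σ) (a : σ) (wu : List γ), f u = some wu → rel u u' →
    u ++ [a] ∈ T.PT → u' ++ [a] ∈ T.PT →
    rel (u ++ [a]) (u' ++ [a]) ∧
    ∀ wua, f (u ++ [a]) = some wua →
      ∃ (wu' x : List γ), f u' = some wu' ∧ wua = wu ++ x ∧ f (u' ++ [a]) = some (wu' ++ x)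
  cond5 : ∀ (u u' : List σ) (w : List γ), u ∈ T.rows → T.val u = TVal.word w → rel u u' →
    (u' ∈ T.rows → T.val u' ≠ TVal.bot) ∧
    ∀ w', u' ∈ T.rows → T.val u' = TVal.word w' →
      ∃ (x fu fu' : List γ), f u = some fu ∧ f u' = some fu' ∧ w = fu ++ x ∧ w' = fu' ++ x
  cond6 : ∀ (u : List σ) (a : σ), (f (u ++ [a])).isSome →
    (¬ ∃ v, rel u v ∧ v ++ [a] ∈ T.PGamma) → f (u ++ [a]) = f u

namespace MergingMap

variable {σ γ : Type} {T : ObsTable σ γ}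

/-- The `≡`-class of `u`. -/
def cls (m : MergingMap T) (u : List σ) : Set (List σ) := {v | m.rel u v}

/-- The set of `≡`-classes meeting `dom f`. -/
def classes (m : MergingMap T) : Set (Set (List σ)) :=
  {C | ∃ u : List σ, (m.f u).isSome ∧ C = m.cls u}

/-- The size of a merging map: the number of `≡`-classes meeting `dom f`. -/
noncomputable def size (m : MergingMap T) : ℕ := m.classes.ncard

lemma cls_mem_classes (m : MergingMap T) {u : List σ} (h : (m.f u).isSome) :
    m.cls u ∈ m.classes := ⟨u, h, rfl⟩

lemma classes_finite [Finite σ] (m : MergingMap T) : m.classes.Finite := by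
  have h : m.classes ⊆ m.cls '' T.PT := by
    rintro C ⟨u, hu, rfl⟩
    exact ⟨u, m.f_mem u hu, rfl⟩
  exact ((T.PT_finite).image _).subset h

/-- A muted pair `(u, a)` of a merging map. -/
def Muted (m : MergingMap T) (u : List σ) (a : σ) : Prop :=
  (m.f u).isSome ∧ (m.f (u ++ [a])).isSome ∧
    ¬ ∃ v, m.rel u v ∧ v ++ [a] ∈ T.PGamma

/-- An open end `(u, a)` of a merging map. -/
def OpenEnd (m : MergingMap T) (u : List σ) (a : σ) : Prop :=
  u ∈ T.PT ∧ ¬ ∃ v, m.rel u v ∧ v ++ [a] ∈ T.PT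

/-- The transducer resulting from a merging map (assuming `f ε` is defined,
so that the initial state exists). -/
noncomputable def resulting [Finite σ] (m : MergingMap T) (h0 : (m.f []).isSome) :
    Transducer σ γ where
  Q := {C : Set (List σ) // C ∈ m.classes}
  fin := m.classes_finite.to_subtype
  q0 := ⟨m.cls [], m.cls_mem_classes h0⟩
  w0 := (m.f []).get h0
  δ := fun q a =>
    if h : ∃ u : List σ, (m.f u).isSome ∧ (m.f (u ++ [a])).isSome ∧ q.1 = m.cls u then
      some (⟨m.cls (h.choose ++ [a]), m.cls_mem_classes h.choose_spec.2.1⟩,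
        ((m.f (h.choose ++ [a])).get h.choose_spec.2.1).drop
          ((m.f h.choose).get h.choose_spec.1).length)
    else none
  δF := fun q =>
    if h : ∃ u : List σ, (m.f u).isSome ∧ q.1 = m.cls u ∧ u ∈ T.rows ∧
        ∃ w, T.val u = TVal.word w then
      some (h.choose_spec.2.2.2.choose.drop ((m.f h.choose).get h.choose_spec.1).length)
    else none

/-- The state `q_u` of the resulting transducer associated with `u ∈ dom f`. -/
noncomputable def state [Finite σ] (m : MergingMap T) (h0 : (m.f []).isSome)
    {u : List σ} (h : (m.f u).isSome) : (m.resulting h0).Q :=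
  ⟨m.cls u, m.cls_mem_classes h⟩

/-- An open completion of a merging map, determined by a choice `g` of added
transitions (which, when used, must only be added at open ends, with output `ε`). -/
noncomputable def openCompletion [Finite σ] (m : MergingMap T) (h0 : (m.f []).isSome)
    (g : (m.resulting h0).Q → σ → Option ((m.resulting h0).Q)) : Transducer σ γ :=
  { m.resulting h0 with
    δ := fun q a =>
      match (m.resulting h0).δ q a with
      | some x => some x
      | none => (g q a).map fun q' => (q', ([] : List γ)) }

/-- The choice `g` of added transitions only adds transitions at open ends. -/
def ValidOpenChoice [Finite σ] (m : MergingMap T) (h0 : (m.f []).isSome)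
    (g : (m.resulting h0).Q → σ → Option ((m.resulting h0).Q)) : Prop :=
  ∀ (q : (m.resulting h0).Q) (a : σ), (g q a).isSome →
    ∃ u : List σ, q.1 = m.cls u ∧ m.OpenEnd u a

/-- The run of `x` in the open completion uses a muted or an open transition. -/
def usesMutedOrOpen [Finite σ] (m : MergingMap T) (h0 : (m.f []).isSome)
    (g : (m.resulting h0).Q → σ → Option ((m.resulting h0).Q)) (x : List σ) : Prop :=
  ∃ (vp : List σ) (a : σ) (vs : List σ) (q : (m.resulting h0).Q) (w : List γ),
    x = vp ++ a :: vs ∧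
    (m.openCompletion h0 g).runFrom (m.openCompletion h0 g).q0 vp = some (q, w) ∧
    ((∃ u, q.1 = m.cls u ∧ m.Muted u a) ∨ (m.resulting h0).δ q a = none)

end MergingMap

/-- The equivalence on `P_T` induced by a transducer: two words are related when
they reach the same state of `M` (or both fail to have a run). -/
def inducedRel {σ γ : Type} (M : Transducer σ γ) (T : ObsTable σ γ) (u v : List σ) : Prop :=
  u ∈ T.PT ∧ v ∈ T.PT ∧
    (M.runFrom M.q0 u).map Prod.fst = (M.runFrom M.q0 v).map Prod.fst

/-- Helper for the induced partial output function: walk through the word,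
appending the transition output only when the step leads into `P_Γ` for
some equivalent word. -/
noncomputable def goF {σ γ : Type} (M : Transducer σ γ) (T : ObsTable σ γ) :
    M.Q → List γ → List σ → Option (List γ)
  | _, acc, [] => some acc
  | q, acc, a :: rest =>
    (M.δ q a).bind fun x =>
      goF M T x.1
        (if ∃ v ∈ T.PT, (M.runFrom M.q0 v).map Prod.fst = some q ∧ v ++ [a] ∈ T.PGamma
          then acc ++ x.2 else acc) rest

/-- The partial output function induced by a transducer on `P_T`. -/
noncomputable def inducedF {σ γ : Type} (M : Transducer σ γ) (T : ObsTable σ γ)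
    (u : List σ) : Option (List γ) :=
  if u ∈ T.PT then goF M T M.q0 M.w0 u else none

section Aux

open Transducer

variable {σ γ : Type}

@[simp] lemma Transducer.runFrom_nil (M : Transducer σ γ) (q : M.Q) :
    M.runFrom q [] = some (q, []) := rfl

@[simp] lemma Transducer.runFrom_cons (M : Transducer σ γ) (q : M.Q) (a : σ) (u : List σ) :
    M.runFrom q (a :: u) =
      (M.δ q a).bind fun x => (M.runFrom x.1 u).map fun y => (y.1, x.2 ++ y.2) := rfl

lemma Transducer.runFrom_append (M : Transducer σ γ) (q : M.Q) (u v : List σ) :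
    M.runFrom q (u ++ v) =
      (M.runFrom q u).bind fun r => (M.runFrom r.1 v).map fun s => (s.1, r.2 ++ s.2) := by
  induction u generalizing q with
  | nil => simp
  | cons a u ih =>
      simp only [List.cons_append, runFrom_cons]
      cases hδ : M.δ q a with
      | none => simp
      | some x =>
          simp only [Option.bind_some, ih x.1]
          cases hr : M.runFrom x.1 u with
          | none => simp
          | some r =>
              simp only [Option.bind_some, Option.map_some, Option.map_map]
              apply Option.map_congr
              intro s _
              simp [List.append_assoc]


lemma Transducer.runFrom_append_some (M : Transducer σ γ) {q q' : M.Q} {u : List σ}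
    {w : List γ} (v : List σ) (h : M.runFrom q u = some (q', w)) :
    M.runFrom q (u ++ v) = (M.runFrom q' v).map fun s => (s.1, w ++ s.2) := by
  rw [Transducer.runFrom_append, h]; rfl

lemma Transducer.runFrom_append_none (M : Transducer σ γ) {q : M.Q} {u : List σ}
    (v : List σ) (h : M.runFrom q u = none) : M.runFrom q (u ++ v) = none := by
  rw [Transducer.runFrom_append, h]; rfl

-- basic table lemmas
namespace ObsTable

lemma mem_PT_of_mem_rows {T : ObsTable σ γ} {x : List σ} (hx : x ∈ T.rows) : x ∈ T.PT :=
  ⟨x, hx, List.prefix_rfl⟩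

lemma PT_prefix_closed {T : ObsTable σ γ} {u w : List σ} (h : u <+: w) (hw : w ∈ T.PT) :
    u ∈ T.PT := by
  obtain ⟨x, hx, hwx⟩ := hw
  exact ⟨x, hx, h.trans hwx⟩

lemma prefix_mem_PT_of_row {T : ObsTable σ γ} {p x : List σ} (hp : p <+: x) (hx : x ∈ T.rows) :
    p ∈ T.PT := PT_prefix_closed hp (mem_PT_of_mem_rows hx)

lemma snoc_mem_PGamma_of_word_row {T : ObsTable σ γ} {p x : List σ} {w : List γ}
    (hp : p <+: x) (hx : x ∈ T.rows) (hw : T.val x = TVal.word w) : p ∈ T.PGamma := by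
  obtain ⟨t, rfl⟩ := hp
  exact ⟨prefix_mem_PT_of_row (List.prefix_append _ _) hx, t, hx, w, hw⟩

end ObsTable

end Aux

namespace MergingMap

variable {σ γ : Type} {T : ObsTable σ γ}

lemma rel_of_cls_eq (m : MergingMap T) {u v : List σ} (h : m.cls u = m.cls v)
    (hv : v ∈ T.PT) : m.rel u v := by
  have hv' : v ∈ m.cls v := m.rel_refl v hv
  rw [← h] at hv'; exact hv'

lemma cls_eq_of_rel (m : MergingMap T) {u v : List σ} (h : m.rel u v) :
    m.cls u = m.cls v := by
  ext w
  constructor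
  · intro hw; exact m.rel_trans (m.rel_symm h) hw
  · intro hw; exact m.rel_trans h hw

lemma f_isSome_snocdown (m : MergingMap T) {u : List σ} {a : σ}
    (h : (m.f (u ++ [a])).isSome) : (m.f u).isSome := by
  obtain ⟨w, hw⟩ := Option.isSome_iff_exists.mp h
  obtain ⟨x, hx, -⟩ := m.cond3 u a w hw
  simp [hx]

lemma f_prefix (m : MergingMap T) {p u : List σ} (hp : p <+: u)
    {w : List γ} (hw : m.f u = some w) : ∃ wp, m.f p = some wp ∧ wp <+: w := by
  obtain ⟨t, rfl⟩ := hp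
  induction t using List.reverseRecOn generalizing w with
  | nil => exact ⟨w, by simpa using hw, List.prefix_rfl⟩
  | append_singleton t b ih =>
      rw [← List.append_assoc] at hw
      obtain ⟨x, hx, hxw⟩ := m.cond3 (p ++ t) b w hw
      obtain ⟨wp, h1, h2⟩ := ih hx
      exact ⟨wp, h1, h2.trans hxw⟩

lemma f_isSome_of_prefix (m : MergingMap T) {p u : List σ} (hp : p <+: u)
    (hu : (m.f u).isSome) : (m.f p).isSome := by
  obtain ⟨w, hw⟩ := Option.isSome_iff_exists.mp hu
  obtain ⟨wp, h1, -⟩ := m.f_prefix hp hw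
  simp [h1]

variable [Finite σ]

lemma δ_resulting_eq (m : MergingMap T) (h0 : (m.f []).isSome) {p : List σ} {b : σ}
    (hp : (m.f p).isSome) (hpb : (m.f (p ++ [b])).isSome) :
    (m.resulting h0).δ (m.state h0 hp) b =
      some (m.state h0 hpb, ((m.f (p ++ [b])).get hpb).drop ((m.f p).get hp).length) := by
  have hcond : ∃ u : List σ, (m.f u).isSome ∧ (m.f (u ++ [b])).isSome ∧
      (m.state h0 hp).1 = m.cls u := ⟨p, hp, hpb, rfl⟩
  show (if h : _ then _ else _) = _
  refine (dif_pos hcond).trans ?_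
  have key : ∀ (hg : (m.f hcond.choose).isSome) (hgb : (m.f (hcond.choose ++ [b])).isSome),
      (⟨m.cls (hcond.choose ++ [b]), m.cls_mem_classes hgb⟩ :
          {C : Set (List σ) // C ∈ m.classes}) = m.state h0 hpb ∧
      ((m.f (hcond.choose ++ [b])).get hgb).drop ((m.f hcond.choose).get hg).length =
        ((m.f (p ++ [b])).get hpb).drop ((m.f p).get hp).length := by
    intro hg hgb
    have h3 : (m.state h0 hp).1 = m.cls hcond.choose := hcond.choose_spec.2.2
    have hrel : m.rel p hcond.choose := m.rel_of_cls_eq h3 (m.f_mem _ hg)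
    have h4 := m.cond4 p hcond.choose b ((m.f p).get hp) (Option.some_get hp).symm hrel
      (m.f_mem _ hpb) (m.f_mem _ hgb)
    obtain ⟨hrelsnoc, h5⟩ := h4
    obtain ⟨wu', x, hfu', hwua, hfua'⟩ := h5 ((m.f (p ++ [b])).get hpb) (Option.some_get hpb).symm
    constructor
    · exact Subtype.ext (m.cls_eq_of_rel hrelsnoc).symm
    · have e1 : (m.f (hcond.choose ++ [b])).get hgb = wu' ++ x := by simp [hfua']
      have e2 : (m.f hcond.choose).get hg = wu' := by simp [hfu']
      rw [e1, e2, List.drop_left, hwua, List.drop_left]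
  obtain ⟨e1, e2⟩ := key hcond.choose_spec.1 hcond.choose_spec.2.1
  rw [e1, e2]
  rfl

lemma f_snoc_isSome_of_δ_isSome (m : MergingMap T) (h0 : (m.f []).isSome) {p : List σ} {b : σ}
    (hp : (m.f p).isSome) (hpPT : p ++ [b] ∈ T.PT)
    (hδ : ((m.resulting h0).δ (m.state h0 hp) b).isSome) : (m.f (p ++ [b])).isSome := by
  by_contra hnone
  have hc : ∃ u : List σ, (m.f u).isSome ∧ (m.f (u ++ [b])).isSome ∧
      (m.state h0 hp).1 = m.cls u := by
    by_contra hc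
    have : (m.resulting h0).δ (m.state h0 hp) b = none := by
      show (if h : _ then _ else _) = _
      exact dif_neg hc
    rw [this] at hδ; simp at hδ
  obtain ⟨u', h1, h2, h3⟩ := hc
  have hrel : m.rel p u' := m.rel_of_cls_eq h3 (m.f_mem u' h1)
  have h4 := (m.cond4 p u' b ((m.f p).get hp) (Option.some_get hp).symm hrel hpPT
    (m.f_mem _ h2)).1
  have h5 := m.cond1 (p ++ [b]) (u' ++ [b]) (Option.not_isSome_iff_eq_none.mp hnone) h4
  rw [h5] at h2; simp at h2

lemma δ_resulting_none (m : MergingMap T) (h0 : (m.f []).isSome) {p : List σ} {b : σ}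
    (hp : (m.f p).isSome) (hpPT : p ++ [b] ∈ T.PT)
    (hnone : m.f (p ++ [b]) = none) : (m.resulting h0).δ (m.state h0 hp) b = none := by
  cases hδ : (m.resulting h0).δ (m.state h0 hp) b with
  | none => rfl
  | some v =>
      have := m.f_snoc_isSome_of_δ_isSome h0 hp hpPT (by simp [hδ])
      rw [hnone] at this; simp at this

lemma δF_resulting_word (m : MergingMap T) (h0 : (m.f []).isSome) {u : List σ}
    (hu : (m.f u).isSome) {w : List γ} (hrow : u ∈ T.rows) (hval : T.val u = TVal.word w) :
    (m.resulting h0).δF (m.state h0 hu) = some (w.drop ((m.f u).get hu).length) := by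
  have hcond : ∃ v : List σ, (m.f v).isSome ∧ (m.state h0 hu).1 = m.cls v ∧ v ∈ T.rows ∧
      ∃ w', T.val v = TVal.word w' := ⟨u, hu, rfl, hrow, w, hval⟩
  show (if h : _ then _ else _) = _
  refine (dif_pos hcond).trans ?_
  have key : ∀ (hh : ∃ w', T.val hcond.choose = TVal.word w')
      (hg : (m.f hcond.choose).isSome),
      hh.choose.drop ((m.f hcond.choose).get hg).length =
        w.drop ((m.f u).get hu).length := by
    intro hh hg
    have h2 : (m.state h0 hu).1 = m.cls hcond.choose := hcond.choose_spec.2.1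
    have h3 : hcond.choose ∈ T.rows := hcond.choose_spec.2.2.1
    have hval'' : T.val hcond.choose = TVal.word hh.choose := hh.choose_spec
    have hrel : m.rel u hcond.choose := m.rel_of_cls_eq h2 (m.f_mem _ hg)
    obtain ⟨x, fu, fu'', hfu, hfu'', hw, hw''⟩ :=
      (m.cond5 u hcond.choose w hrow hval hrel).2 hh.choose h3 hval''
    rw [hw, hw'']
    have e1 : (m.f u).get hu = fu := by simp [hfu]
    have e2 : (m.f hcond.choose).get hg = fu'' := by simp [hfu'']
    rw [e1, e2, List.drop_left, List.drop_left]
  exact congrArg some (key hcond.choose_spec.2.2.2 hcond.choose_spec.1)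

lemma δF_resulting_bot (m : MergingMap T) (h0 : (m.f []).isSome) {u : List σ}
    (hu : (m.f u).isSome) (hrow : u ∈ T.rows) (hval : T.val u = TVal.bot) :
    (m.resulting h0).δF (m.state h0 hu) = none := by
  have hcond : ¬ ∃ v : List σ, (m.f v).isSome ∧ (m.state h0 hu).1 = m.cls v ∧ v ∈ T.rows ∧
      ∃ w, T.val v = TVal.word w := by
    rintro ⟨v, h1, h2, h3, w, h4⟩
    have hrel : m.rel v u := m.rel_symm (m.rel_of_cls_eq h2 (m.f_mem _ h1))
    exact (m.cond5 v u w h3 h4 hrel).1 hrow hval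
  show (if h : _ then _ else _) = _
  exact dif_neg hcond

end MergingMap

namespace MergingMap

variable {σ γ : Type} {T : ObsTable σ γ}

lemma drop_chain {γ : Type} {A B C : List γ} (h1 : A <+: B) (h2 : B <+: C) :
    B.drop A.length ++ C.drop B.length = C.drop A.length := by
  obtain ⟨s, rfl⟩ := h1
  obtain ⟨t, rfl⟩ := h2
  have e1 : (A ++ s).drop A.length = s := List.drop_left (l₁ := A) (l₂ := s)
  have e3 : ((A ++ s) ++ t).drop A.length = s ++ t := by
    rw [List.append_assoc]; exact List.drop_left (l₁ := A)
  rw [e1, List.drop_left, e3]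

lemma f_get_prefix (m : MergingMap T) {p u : List σ} (hpre : p <+: u)
    (hp : (m.f p).isSome) (hu : (m.f u).isSome) :
    (m.f p).get hp <+: (m.f u).get hu := by
  obtain ⟨wp, h1, h2⟩ := m.f_prefix hpre (Option.some_get hu).symm
  have e : (m.f p).get hp = wp := by simp [h1]
  rw [e]; exact h2

variable [Finite σ]

/-- Core run lemma: any transducer obtained from the resulting transducer by changing `δ`,
as long as `δ` agrees with the resulting transducer along the word `z`, runs `z` to the
state `q_z` with output `f(ε)⁻¹ f(z)`. -/
lemma runFrom_eq_of_f (m : MergingMap T) (h0 : (m.f []).isSome)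
    (d : (m.resulting h0).Q → σ → Option ((m.resulting h0).Q × List γ)) (z : List σ) :
    ∀ (hz : ∀ p, p <+: z → (m.f p).isSome)
      (_ : ∀ (p : List σ) (b : σ) (hp : (m.f p).isSome), p ++ [b] <+: z →
        (m.f (p ++ [b])).isSome → d (m.state h0 hp) b = (m.resulting h0).δ (m.state h0 hp) b),
    ({ m.resulting h0 with δ := d } : Transducer σ γ).runFrom (m.resulting h0).q0 z =
      some (m.state h0 (hz z List.prefix_rfl),
        ((m.f z).get (hz z List.prefix_rfl)).drop ((m.f []).get h0).length) := by
  induction z using List.reverseRecOn with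
  | nil =>
      intro hz _
      have e : ((m.f []).get (hz [] List.prefix_rfl)).drop ((m.f []).get h0).length = [] :=
        List.drop_length
      rw [Transducer.runFrom_nil, e]
      rfl
  | append_singleton y b ih =>
      intro hz hd
      have hy : ∀ p, p <+: y → (m.f p).isSome :=
        fun p hp => hz p (hp.trans (List.prefix_append _ _))
      have hfy : (m.f y).isSome := hy y List.prefix_rfl
      have hfyb : (m.f (y ++ [b])).isSome := hz _ List.prefix_rfl
      have ihy := ih hy (fun p c hp hpre hpc => hd p c hp (hpre.trans (List.prefix_append _ _)) hpc)
      have hδ : d (m.state h0 hfy) b = (m.resulting h0).δ (m.state h0 hfy) b :=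
        hd y b hfy List.prefix_rfl hfyb
      have hstep : ({ m.resulting h0 with δ := d } : Transducer σ γ).runFrom
          (m.state h0 hfy) [b] = some (m.state h0 hfyb,
            ((m.f (y ++ [b])).get hfyb).drop ((m.f y).get hfy).length ++ []) := by
        rw [Transducer.runFrom_cons]
        show (d (m.state h0 hfy) b).bind _ = _
        rw [hδ, m.δ_resulting_eq h0 hfy hfyb]
        rfl
      rw [Transducer.runFrom_append, ihy, Option.bind_some, hstep, Option.map_some,
        List.append_nil]
      exact congrArg some (congrArg (fun o => (m.state h0 hfyb, o))
        (drop_chain (m.f_get_prefix ((List.nil_prefix (l := y))) h0 hfy)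
          (m.f_get_prefix (List.prefix_append y [b]) hfy hfyb)))

lemma assemble {γ : Type} {A B C : List γ} (h1 : A <+: B) (h2 : B <+: C) :
    A ++ B.drop A.length ++ C.drop B.length = C := by
  obtain ⟨s, rfl⟩ := h1
  obtain ⟨t, rfl⟩ := h2
  rw [List.drop_left, List.drop_left]

lemma run_openCompletion (m : MergingMap T) (h0 : (m.f []).isSome)
    (g : (m.resulting h0).Q → σ → Option ((m.resulting h0).Q))
    (z : List σ) (hz : ∀ p, p <+: z → (m.f p).isSome) :
    (m.openCompletion h0 g).runFrom (m.openCompletion h0 g).q0 z =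
      some (m.state h0 (hz z List.prefix_rfl),
        ((m.f z).get (hz z List.prefix_rfl)).drop ((m.f []).get h0).length) := by
  have key := m.runFrom_eq_of_f h0 (fun q a =>
    match (m.resulting h0).δ q a with
    | some x => some x
    | none => (g q a).map fun q' => (q', ([] : List γ))) z hz ?_
  · exact key
  · intro p b hp hpre hpb
    show (match (m.resulting h0).δ (m.state h0 hp) b with
      | some x => some x
      | none => (g (m.state h0 hp) b).map fun q' => (q', ([] : List γ))) =
      (m.resulting h0).δ (m.state h0 hp) b
    rw [m.δ_resulting_eq h0 hp hpb]

lemma run_modify (m : MergingMap T) (h0 : (m.f []).isSome)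
    (g : (m.resulting h0).Q → σ → Option ((m.resulting h0).Q))
    (qx : (m.resulting h0).Q) (a : σ)
    (z : List σ) (hz : ∀ p, p <+: z → (m.f p).isSome)
    (havoid : ∀ (p : List σ) (b : σ) (hp : (m.f p).isSome), p ++ [b] <+: z →
      (m.f (p ++ [b])).isSome → ¬(m.state h0 hp = qx ∧ b = a)) :
    ((m.openCompletion h0 g).modifyDelta qx a none).runFrom (m.resulting h0).q0 z =
      some (m.state h0 (hz z List.prefix_rfl),
        ((m.f z).get (hz z List.prefix_rfl)).drop ((m.f []).get h0).length) := by
  have key := m.runFrom_eq_of_f h0 (fun p b =>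
    if p = qx ∧ b = a then none else (m.openCompletion h0 g).δ p b) z hz ?_
  · exact key
  · intro p b hp hpre hpb
    show (if m.state h0 hp = qx ∧ b = a then none
        else (m.openCompletion h0 g).δ (m.state h0 hp) b) =
      (m.resulting h0).δ (m.state h0 hp) b
    rw [if_neg (havoid p b hp hpre hpb)]
    show (match (m.resulting h0).δ (m.state h0 hp) b with
      | some x => some x
      | none => (g (m.state h0 hp) b).map fun q' => (q', ([] : List γ))) =
      (m.resulting h0).δ (m.state h0 hp) b
    rw [m.δ_resulting_eq h0 hp hpb]

lemma run_openCompletion_cases (m : MergingMap T) (h0 : (m.f []).isSome)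
    (g : (m.resulting h0).Q → σ → Option ((m.resulting h0).Q))
    (hg : m.ValidOpenChoice h0 g) (z : List σ) :
    (∀ p, p <+: z → p ∈ T.PT) →
    (m.openCompletion h0 g).runFrom (m.openCompletion h0 g).q0 z = none ∨
      ∃ (hf : (m.f z).isSome) (w : List γ),
        (m.openCompletion h0 g).runFrom (m.openCompletion h0 g).q0 z =
          some (m.state h0 hf, w) := by
  induction z using List.reverseRecOn with
  | nil => exact fun _ => Or.inr ⟨h0, [], rfl⟩
  | append_singleton y b ih =>
      intro hzPT
      have hyPT : ∀ p, p <+: y → p ∈ T.PT :=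
        fun p hp => hzPT p (hp.trans (List.prefix_append _ _))
      rcases ih hyPT with hnone | ⟨hfy, w, hsome⟩
      · left; rw [Transducer.runFrom_append, hnone]; rfl
      · rw [Transducer.runFrom_append_some _ _ hsome]
        by_cases hfyb : (m.f (y ++ [b])).isSome
        · have hstep : (m.openCompletion h0 g).runFrom (m.state h0 hfy) [b] =
                some (m.state h0 hfyb,
                  ((m.f (y ++ [b])).get hfyb).drop ((m.f y).get hfy).length ++ []) := by
            erw [Transducer.runFrom_cons]
            show ((match (m.resulting h0).δ (m.state h0 hfy) b with
              | some x => some x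
              | none => (g (m.state h0 hfy) b).map fun q' => (q', ([] : List γ)))).bind _ = _
            rw [m.δ_resulting_eq h0 hfy hfyb]
            rfl
          erw [hstep, Option.map_some]
          exact Or.inr ⟨hfyb, _, rfl⟩
        · have hfb : m.f (y ++ [b]) = none := Option.not_isSome_iff_eq_none.mp hfyb
          have hR : (m.resulting h0).δ (m.state h0 hfy) b = none :=
            m.δ_resulting_none h0 hfy (hzPT _ List.prefix_rfl) hfb
          cases hgb : g (m.state h0 hfy) b with
          | none =>
              left
              have hδ : (m.openCompletion h0 g).δ (m.state h0 hfy) b = none := by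
                show (match (m.resulting h0).δ (m.state h0 hfy) b with
                  | some x => some x
                  | none => (g (m.state h0 hfy) b).map fun q' => (q', ([] : List γ))) = none
                rw [hR, hgb]
                rfl
              erw [Transducer.runFrom_cons, hδ]
              rfl
          | some q' =>
              exfalso
              obtain ⟨u₁, hcls, hu₁PT, hnot⟩ := hg (m.state h0 hfy) b (by simp [hgb])
              exact hnot ⟨y, m.rel_of_cls_eq hcls.symm (hyPT y List.prefix_rfl),
                hzPT _ List.prefix_rfl⟩

lemma f_isSome_of_prefix_word_row (m : MergingMap T) {z : List σ} {w : List γ}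
    (hz : z ∈ T.rows) (hw : T.val z = TVal.word w) {p : List σ} (hp : p <+: z) :
    (m.f p).isSome := by
  obtain ⟨t, rfl⟩ := hp
  obtain ⟨x, hx, -⟩ := m.cond2 p t w
    (ObsTable.prefix_mem_PT_of_row (List.prefix_append _ _) hz) hz hw
  simp [hx]

lemma f_prefix_word_self (m : MergingMap T) {z : List σ} {w : List γ}
    (hz : z ∈ T.rows) (hw : T.val z = TVal.word w) (hf : (m.f z).isSome) :
    (m.f z).get hf <+: w := by
  obtain ⟨x, hx, hxw⟩ := m.cond2 z [] w (ObsTable.mem_PT_of_mem_rows hz)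
    (by simpa using hz) (by simpa using hw)
  have e : (m.f z).get hf = x := by simp [hx]
  rw [e]; exact hxw

lemma sem_openCompletion_word (m : MergingMap T) (h0 : (m.f []).isSome)
    (g : (m.resulting h0).Q → σ → Option ((m.resulting h0).Q))
    {z : List σ} {w : List γ} (hz : z ∈ T.rows) (hw : T.val z = TVal.word w) :
    (m.openCompletion h0 g).sem z = some w := by
  have hpref : ∀ p, p <+: z → (m.f p).isSome :=
    fun p hp => m.f_isSome_of_prefix_word_row hz hw hp
  erw [Transducer.sem, run_openCompletion m h0 g z hpref, Option.bind_some]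
  have hδF : (m.openCompletion h0 g).δF (m.state h0 (hpref z List.prefix_rfl)) =
      some (w.drop ((m.f z).get (hpref z List.prefix_rfl)).length) :=
    m.δF_resulting_word h0 _ hz hw
  rw [hδF, Option.map_some]
  exact congrArg some (assemble
    (m.f_get_prefix (List.nil_prefix (l := z)) h0 (hpref z List.prefix_rfl))
    (m.f_prefix_word_self hz hw (hpref z List.prefix_rfl)))

lemma sem_openCompletion_bot (m : MergingMap T) (h0 : (m.f []).isSome)
    (g : (m.resulting h0).Q → σ → Option ((m.resulting h0).Q))
    (hg : m.ValidOpenChoice h0 g) {z : List σ} (hz : z ∈ T.rows)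
    (hb : T.val z = TVal.bot) : (m.openCompletion h0 g).sem z = none := by
  have hzPT : ∀ p, p <+: z → p ∈ T.PT := fun p hp => ObsTable.prefix_mem_PT_of_row hp hz
  rcases run_openCompletion_cases m h0 g hg z hzPT with hnone | ⟨hf, w, hsome⟩
  · rw [Transducer.sem, hnone]; rfl
  · erw [Transducer.sem, hsome, Option.bind_some]
    have hδF : (m.openCompletion h0 g).δF (m.state h0 hf) = none :=
      m.δF_resulting_bot h0 hf hz hb
    rw [hδF]
    rfl

lemma compatible_openCompletion (m : MergingMap T) (h0 : (m.f []).isSome)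
    (g : (m.resulting h0).Q → σ → Option ((m.resulting h0).Q))
    (hg : m.ValidOpenChoice h0 g) : T.Compatible (m.openCompletion h0 g) := by
  intro z hz
  constructor
  · intro w hw; exact sem_openCompletion_word m h0 g hz hw
  · intro hb; exact sem_openCompletion_bot m h0 g hg hz hb

lemma runFrom_modifyDelta_none_le (M : Transducer σ γ) (qx : M.Q) (a : σ) :
    ∀ (z : List σ) (q : M.Q) (r), (M.modifyDelta qx a none).runFrom q z = some r →
      M.runFrom q z = some r := by
  intro z
  induction z with
  | nil => intro q r h; exact h
  | cons b rest ih =>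
      intro q r h
      erw [Transducer.runFrom_cons] at h ⊢
      have hδ : (M.modifyDelta qx a none).δ q b =
          if q = qx ∧ b = a then none else M.δ q b := rfl
      rw [hδ] at h
      by_cases hc : q = qx ∧ b = a
      · rw [if_pos hc] at h; cases h
      · rw [if_neg hc] at h
        cases hx : M.δ q b with
        | none => rw [hx] at h; cases h
        | some x =>
            rw [hx] at h
            simp only [Option.bind_some] at h ⊢
            cases hr : (M.modifyDelta qx a none).runFrom x.1 rest with
            | none =>
                have h' : ((M.modifyDelta qx a none).runFrom x.1 rest).map
                    (fun y => (y.1, x.2 ++ y.2)) = some r := h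
                rw [hr] at h'; cases h'
            | some s =>
                have h' : ((M.modifyDelta qx a none).runFrom x.1 rest).map
                    (fun y => (y.1, x.2 ++ y.2)) = some r := h
                rw [hr] at h'
                exact (congrArg (Option.map fun y : M.Q × List γ => (y.1, x.2 ++ y.2)) (ih x.1 s hr)).trans h'

lemma sem_modify_word (m : MergingMap T) (h0 : (m.f []).isSome)
    (g : (m.resulting h0).Q → σ → Option ((m.resulting h0).Q))
    (qx : (m.resulting h0).Q) (a : σ)
    (hcase : (∃ u, qx.1 = m.cls u ∧ m.Muted u a) ∨ (m.resulting h0).δ qx a = none)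
    {z : List σ} {w : List γ} (hz : z ∈ T.rows) (hw : T.val z = TVal.word w) :
    ((m.openCompletion h0 g).modifyDelta qx a none).sem z = some w := by
  have hpref : ∀ p, p <+: z → (m.f p).isSome :=
    fun p hp => m.f_isSome_of_prefix_word_row hz hw hp
  have havoid : ∀ (p : List σ) (b : σ) (hp : (m.f p).isSome), p ++ [b] <+: z →
      (m.f (p ++ [b])).isSome → ¬(m.state h0 hp = qx ∧ b = a) := by
    rintro p b hp hpre hpb ⟨hq, rfl⟩
    rcases hcase with ⟨u, hcls, hmut⟩ | hnone
    · have hclsup : m.cls u = m.cls p := by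
        rw [← hcls, ← hq]; rfl
      exact hmut.2.2 ⟨p, m.rel_of_cls_eq hclsup (m.f_mem p hp),
        ObsTable.snoc_mem_PGamma_of_word_row hpre hz hw⟩
    · have hstep := m.δ_resulting_eq h0 hp hpb
      rw [hq, hnone] at hstep
      cases hstep
  have hq0 : ((m.openCompletion h0 g).modifyDelta qx a none).q0 = (m.resulting h0).q0 := rfl
  erw [Transducer.sem, hq0, run_modify m h0 g qx a z hpref havoid, Option.bind_some]
  have hδF : ((m.openCompletion h0 g).modifyDelta qx a none).δF
      (m.state h0 (hpref z List.prefix_rfl)) =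
      some (w.drop ((m.f z).get (hpref z List.prefix_rfl)).length) :=
    m.δF_resulting_word h0 _ hz hw
  rw [hδF, Option.map_some]
  exact congrArg some (assemble
    (m.f_get_prefix (List.nil_prefix (l := z)) h0 (hpref z List.prefix_rfl))
    (m.f_prefix_word_self hz hw (hpref z List.prefix_rfl)))

lemma sem_modify_bot (m : MergingMap T) (h0 : (m.f []).isSome)
    (g : (m.resulting h0).Q → σ → Option ((m.resulting h0).Q))
    (hg : m.ValidOpenChoice h0 g) (qx : (m.resulting h0).Q) (a : σ)
    {z : List σ} (hz : z ∈ T.rows) (hb : T.val z = TVal.bot) :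
    ((m.openCompletion h0 g).modifyDelta qx a none).sem z = none := by
  have hzPT : ∀ p, p <+: z → p ∈ T.PT := fun p hp => ObsTable.prefix_mem_PT_of_row hp hz
  cases hr2 : ((m.openCompletion h0 g).modifyDelta qx a none).runFrom
      ((m.openCompletion h0 g).modifyDelta qx a none).q0 z with
  | none => rw [Transducer.sem, hr2]; rfl
  | some r =>
      have hr1 : (m.openCompletion h0 g).runFrom (m.openCompletion h0 g).q0 z = some r :=
        runFrom_modifyDelta_none_le (m.openCompletion h0 g) qx a z _ r hr2
      rcases run_openCompletion_cases m h0 g hg z hzPT with hnone | ⟨hf, w, hsome⟩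
      · rw [hr1] at hnone; cases hnone
      · rw [hr1] at hsome
        have hrr : r = (m.state h0 hf, w) := Option.some_injective _ hsome
        erw [Transducer.sem, hr2, Option.bind_some, hrr]
        have hδF : ((m.openCompletion h0 g).modifyDelta qx a none).δF (m.state h0 hf) = none :=
          m.δF_resulting_bot h0 hf hz hb
        rw [hδF]
        rfl

lemma compatible_modify (m : MergingMap T) (h0 : (m.f []).isSome)
    (g : (m.resulting h0).Q → σ → Option ((m.resulting h0).Q))
    (hg : m.ValidOpenChoice h0 g) (qx : (m.resulting h0).Q) (a : σ)
    (hcase : (∃ u, qx.1 = m.cls u ∧ m.Muted u a) ∨ (m.resulting h0).δ qx a = none) :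
    T.Compatible ((m.openCompletion h0 g).modifyDelta qx a none) := by
  intro z hz
  constructor
  · intro w hw; exact sem_modify_word m h0 g qx a hcase hz hw
  · intro hb; exact sem_modify_bot m h0 g hg qx a hz hb

lemma size_resulting (m : MergingMap T) (h0 : (m.f []).isSome) :
    (m.resulting h0).size = m.size := by
  show Nat.card {C : Set (List σ) // C ∈ m.classes} = m.classes.ncard
  exact Nat.card_coe_set_eq m.classes

end MergingMap

section Induced

variable {σ γ : Type}

@[simp] lemma goF_nil (N : Transducer σ γ) (T : ObsTable σ γ) (q : N.Q) (acc : List γ) :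
    goF N T q acc [] = some acc := rfl

lemma goF_cons (N : Transducer σ γ) (T : ObsTable σ γ) (q : N.Q) (acc : List γ)
    (a : σ) (rest : List σ) :
    goF N T q acc (a :: rest) = (N.δ q a).bind fun x =>
      goF N T x.1
        (if ∃ v ∈ T.PT, (N.runFrom N.q0 v).map Prod.fst = some q ∧ v ++ [a] ∈ T.PGamma
          then acc ++ x.2 else acc) rest := rfl

lemma goF_isSome_iff (N : Transducer σ γ) (T : ObsTable σ γ) (z : List σ) :
    ∀ (q : N.Q) (acc : List γ), (goF N T q acc z).isSome ↔ (N.runFrom q z).isSome := by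
  induction z with
  | nil => intro q acc; simp
  | cons a rest ih =>
      intro q acc
      rw [goF_cons, Transducer.runFrom_cons]
      cases hδ : N.δ q a with
      | none => simp
      | some x => simp [ih]

lemma goF_append (N : Transducer σ γ) (T : ObsTable σ γ) (z1 z2 : List σ) :
    ∀ (q : N.Q) (acc : List γ),
    goF N T q acc (z1 ++ z2) = (N.runFrom q z1).bind fun r =>
      (goF N T q acc z1).bind fun w1 => goF N T r.1 w1 z2 := by
  induction z1 with
  | nil => intro q acc; simp
  | cons a rest ih =>
      intro q acc
      rw [List.cons_append, goF_cons, goF_cons, Transducer.runFrom_cons]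
      cases hδ : N.δ q a with
      | none => simp
      | some x =>
          simp only [Option.bind_some]
          rw [ih]
          cases hr : N.runFrom x.1 rest with
          | none => simp
          | some r => simp

lemma goF_run_eq (N : Transducer σ γ) (T : ObsTable σ γ) (z : List σ) :
    ∀ (p : List σ) (q : N.Q) (wp acc : List γ),
    N.runFrom N.q0 p = some (q, wp) →
    (∀ (p1 : List σ) (b : σ), p <+: p1 → p1 ++ [b] <+: p ++ z →
      p1 ∈ T.PT ∧ p1 ++ [b] ∈ T.PGamma) →
    goF N T q acc z = (N.runFrom q z).map fun s => acc ++ s.2 := by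
  induction z with
  | nil => intro p q wp acc _ _; simp
  | cons b rest ih =>
      intro p q wp acc hrun hcond
      rw [goF_cons, Transducer.runFrom_cons]
      have hpre : p ++ [b] <+: p ++ (b :: rest) := ⟨rest, by simp⟩
      have hC : ∃ v ∈ T.PT, (N.runFrom N.q0 v).map Prod.fst = some q ∧
          v ++ [b] ∈ T.PGamma := by
        refine ⟨p, (hcond p b List.prefix_rfl hpre).1, by rw [hrun]; rfl,
          (hcond p b List.prefix_rfl hpre).2⟩
      simp only [if_pos hC]
      cases hδ : N.δ q b with
      | none => simp
      | some x =>
          simp only [Option.bind_some]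
          have hrun' : N.runFrom N.q0 (p ++ [b]) = some (x.1, wp ++ (x.2 ++ [])) := by
            rw [Transducer.runFrom_append_some _ _ hrun, Transducer.runFrom_cons, hδ]
            rfl
          rw [ih (p ++ [b]) x.1 _ (acc ++ x.2) hrun' ?_]
          · cases hr : N.runFrom x.1 rest with
            | none => simp
            | some s => simp [List.append_assoc]
          · intro p1 c hp1 hb1
            refine hcond p1 c ((List.prefix_append p [b]).trans hp1) ?_
            simpa [List.append_assoc] using hb1

lemma inducedF_eq_of_word_row (N : Transducer σ γ) (T : ObsTable σ γ) {z p : List σ}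
    {w : List γ} (hz : z ∈ T.rows) (hw : T.val z = TVal.word w) (hp : p <+: z) :
    inducedF N T p = (N.runFrom N.q0 p).map fun s => N.w0 ++ s.2 := by
  rw [inducedF, if_pos (ObsTable.prefix_mem_PT_of_row hp hz)]
  refine goF_run_eq N T p [] N.q0 [] N.w0 rfl ?_
  intro p1 b hp1 hb1
  have hb1' : p1 ++ [b] <+: z := by
    refine List.IsPrefix.trans ?_ hp
    simpa using hb1
  exact ⟨ObsTable.prefix_mem_PT_of_row ((List.prefix_append p1 [b]).trans hb1') hz,
    ObsTable.snoc_mem_PGamma_of_word_row hb1' hz hw⟩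

lemma inducedF_isSome_iff (N : Transducer σ γ) (T : ObsTable σ γ) {u : List σ}
    (hu : u ∈ T.PT) : (inducedF N T u).isSome ↔ (N.runFrom N.q0 u).isSome := by
  rw [inducedF, if_pos hu]
  exact goF_isSome_iff N T u N.q0 N.w0

lemma runFrom_snoc_fst (N : Transducer σ γ) (q : N.Q) (u : List σ) (a : σ) :
    (N.runFrom q (u ++ [a])).map Prod.fst =
      (N.runFrom q u).bind fun r => (N.δ r.1 a).map Prod.fst := by
  rw [Transducer.runFrom_append]
  cases hr : N.runFrom q u with
  | none => simp
  | some r =>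
      simp only [Option.bind_some]
      rw [Transducer.runFrom_cons]
      cases hδ : N.δ r.1 a with
      | none => simp
      | some x => simp

end Induced

section InducedMM

variable {σ γ : Type}

lemma run_fst_congr {N : Transducer σ γ} {u u' : List σ} {r : N.Q × List γ}
    (hfst : (N.runFrom N.q0 u).map Prod.fst = (N.runFrom N.q0 u').map Prod.fst)
    (hr : N.runFrom N.q0 u = some r) : ∃ w2, N.runFrom N.q0 u' = some (r.1, w2) := by
  rw [hr] at hfst
  cases hr' : N.runFrom N.q0 u' with
  | none => rw [hr'] at hfst; simp at hfst
  | some r' =>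
      rw [hr'] at hfst
      simp only [Option.map_some] at hfst
      have h1 : r.1 = r'.1 := Option.some_injective _ hfst
      exact ⟨r'.2, congrArg some (Prod.ext_iff.mpr ⟨h1.symm, rfl⟩)⟩

/-- The merging map induced by a transducer compatible with the table. -/
noncomputable def inducedMM (N : Transducer σ γ) (T : ObsTable σ γ)
    (hN : T.Compatible N) : MergingMap T where
  rel := inducedRel N T
  f := inducedF N T
  rel_mem := fun _ _ h => ⟨h.1, h.2.1⟩
  rel_refl := fun u hu => ⟨hu, hu, rfl⟩
  rel_symm := fun h => ⟨h.2.1, h.1, h.2.2.symm⟩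
  rel_trans := fun h1 h2 => ⟨h1.1, h2.2.1, h1.2.2.trans h2.2.2⟩
  f_mem := by
    intro u h
    by_contra hu
    rw [inducedF, if_neg hu] at h
    simp at h
  cond1 := by
    rintro u v hu ⟨huPT, hvPT, hrfst⟩
    rw [inducedF, if_pos huPT] at hu
    have h1 : N.runFrom N.q0 u = none := by
      cases hr : N.runFrom N.q0 u with
      | none => rfl
      | some r =>
          have hs : (goF N T N.q0 N.w0 u).isSome :=
            (goF_isSome_iff N T u N.q0 N.w0).mpr (by simp [hr])
          rw [hu] at hs; simp at hs
    have h2 : N.runFrom N.q0 v = none := by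
      rw [h1] at hrfst
      cases hr : N.runFrom N.q0 v with
      | none => rfl
      | some r => rw [hr] at hrfst; simp at hrfst
    rw [inducedF, if_pos hvPT]
    have hns : ¬ (goF N T N.q0 N.w0 v).isSome = true := by
      rw [goF_isSome_iff N T v N.q0 N.w0, h2]; simp
    exact Option.not_isSome_iff_eq_none.mp hns
  cond2 := by
    intro u v w huPT hrow hval
    have hsem : N.sem (u ++ v) = some w := (hN _ hrow).1 w hval
    rw [Transducer.sem] at hsem
    cases hruv : N.runFrom N.q0 (u ++ v) with
    | none => rw [hruv] at hsem; simp at hsem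
    | some ruv =>
        rw [hruv, Option.bind_some] at hsem
        cases hδF : N.δF ruv.1 with
        | none => rw [hδF] at hsem; simp at hsem
        | some wf =>
          rw [hδF, Option.map_some] at hsem
          have hw : N.w0 ++ ruv.2 ++ wf = w := Option.some_injective _ hsem
          rw [Transducer.runFrom_append] at hruv
          cases hru : N.runFrom N.q0 u with
          | none => rw [hru] at hruv; simp at hruv
          | some ru =>
              rw [hru, Option.bind_some] at hruv
              cases hrv : N.runFrom ru.1 v with
              | none => rw [hrv] at hruv; simp at hruv
              | some rv =>
                  rw [hrv, Option.map_some] at hruv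
                  have he := Option.some_injective _ hruv
                  have hruv2 : ruv.2 = ru.2 ++ rv.2 := by rw [← he]
                  have hfu : inducedF N T u = some (N.w0 ++ ru.2) := by
                    rw [inducedF_eq_of_word_row N T hrow hval (List.prefix_append u v), hru]
                    rfl
                  refine ⟨N.w0 ++ ru.2, hfu, ⟨rv.2 ++ wf, ?_⟩⟩
                  rw [← hw, hruv2]
                  simp [List.append_assoc]
  cond3 := by
    intro u a w hw
    have hPT : u ++ [a] ∈ T.PT := by
      by_contra h
      rw [inducedF, if_neg h] at hw; cases hw
    have huPT : u ∈ T.PT := ObsTable.PT_prefix_closed (List.prefix_append u [a]) hPT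
    rw [inducedF, if_pos hPT, goF_append N T u [a]] at hw
    cases hru : N.runFrom N.q0 u with
    | none => rw [hru] at hw; simp at hw
    | some r =>
        rw [hru, Option.bind_some] at hw
        cases hgu : goF N T N.q0 N.w0 u with
        | none => rw [hgu] at hw; simp at hw
        | some w1 =>
            rw [hgu, Option.bind_some, goF_cons] at hw
            cases hδ : N.δ r.1 a with
            | none => rw [hδ] at hw; simp at hw
            | some x =>
                rw [hδ, Option.bind_some, goF_nil] at hw
                refine ⟨w1, by rw [inducedF, if_pos huPT]; exact hgu, ?_⟩
                have hw' := Option.some_injective _ hw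
                rw [← hw']
                by_cases hC : ∃ v ∈ T.PT, (N.runFrom N.q0 v).map Prod.fst = some r.1 ∧
                    v ++ [a] ∈ T.PGamma
                · rw [if_pos hC]; exact List.prefix_append w1 x.2
                · rw [if_neg hC]
  cond4 := by
    intro u u' a wu hfu hrel hua hu'a
    obtain ⟨huPT, hu'PT, hrfst⟩ := hrel
    have hfug : goF N T N.q0 N.w0 u = some wu := by
      rw [inducedF, if_pos huPT] at hfu; exact hfu
    have hrus : (N.runFrom N.q0 u).isSome := by
      rw [← goF_isSome_iff N T u N.q0 N.w0]; simp [hfug]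
    obtain ⟨r, hru⟩ := Option.isSome_iff_exists.mp hrus
    obtain ⟨w2, hru'⟩ := run_fst_congr hrfst hru
    have hfst2 : (N.runFrom N.q0 (u ++ [a])).map Prod.fst =
        (N.runFrom N.q0 (u' ++ [a])).map Prod.fst := by
      rw [runFrom_snoc_fst, runFrom_snoc_fst, hru, hru']
      simp
    refine ⟨⟨hua, hu'a, hfst2⟩, ?_⟩
    intro wua hwua
    rw [inducedF, if_pos hua, goF_append N T u [a], hru, Option.bind_some, hfug,
      Option.bind_some, goF_cons] at hwua
    cases hδ : N.δ r.1 a with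
    | none => rw [hδ] at hwua; simp at hwua
    | some x =>
        rw [hδ, Option.bind_some, goF_nil] at hwua
        have hwua' := Option.some_injective _ hwua
        have hgu's : (goF N T N.q0 N.w0 u').isSome := by
          rw [goF_isSome_iff N T u' N.q0 N.w0]; simp [hru']
        obtain ⟨wu', hwu'⟩ := Option.isSome_iff_exists.mp hgu's
        refine ⟨wu',
          if ∃ v ∈ T.PT, (N.runFrom N.q0 v).map Prod.fst = some r.1 ∧ v ++ [a] ∈ T.PGamma
            then x.2 else [], ?_, ?_, ?_⟩
        · rw [inducedF, if_pos hu'PT]; exact hwu'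
        · rw [← hwua']
          by_cases hC : ∃ v ∈ T.PT, (N.runFrom N.q0 v).map Prod.fst = some r.1 ∧
              v ++ [a] ∈ T.PGamma
          · rw [if_pos hC, if_pos hC]
          · rw [if_neg hC, if_neg hC, List.append_nil]
        · rw [inducedF, if_pos hu'a, goF_append N T u' [a]]
          simp only [hru', Option.bind_some, hwu', goF_cons, hδ, goF_nil]
          by_cases hC : ∃ v ∈ T.PT, (N.runFrom N.q0 v).map Prod.fst = some r.1 ∧
              v ++ [a] ∈ T.PGamma
          · rw [if_pos hC, if_pos hC]
          · rw [if_neg hC, if_neg hC, List.append_nil]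
  cond5 := by
    intro u u' w hrow hval hrel
    obtain ⟨huPT, hu'PT, hrfst⟩ := hrel
    have hsem : N.sem u = some w := (hN u hrow).1 w hval
    rw [Transducer.sem] at hsem
    cases hru : N.runFrom N.q0 u with
    | none => rw [hru] at hsem; simp at hsem
    | some r =>
        rw [hru, Option.bind_some] at hsem
        cases hδF : N.δF r.1 with
        | none => rw [hδF] at hsem; simp at hsem
        | some wf =>
          rw [hδF, Option.map_some] at hsem
          have hw : N.w0 ++ r.2 ++ wf = w := Option.some_injective _ hsem
          obtain ⟨w2, hru'⟩ := run_fst_congr hrfst hru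
          constructor
          · intro hrow' hbot
            have hsem' : N.sem u' = none := (hN u' hrow').2 hbot
            rw [Transducer.sem, hru', Option.bind_some] at hsem'
            simp only [hδF] at hsem'
            simp at hsem'
          · intro w' hrow' hval'
            have hsem' : N.sem u' = some w' := (hN u' hrow').1 w' hval'
            rw [Transducer.sem, hru', Option.bind_some] at hsem'
            simp only [hδF, Option.map_some] at hsem'
            have hw' : N.w0 ++ w2 ++ wf = w' := Option.some_injective _ hsem'
            refine ⟨wf, N.w0 ++ r.2, N.w0 ++ w2, ?_, ?_, ?_, ?_⟩
            · rw [inducedF_eq_of_word_row N T hrow hval List.prefix_rfl, hru]; rfl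
            · rw [inducedF_eq_of_word_row N T hrow' hval' List.prefix_rfl, hru']; rfl
            · rw [← hw]
            · rw [← hw']
  cond6 := by
    intro u a hsome hno
    have hPT : u ++ [a] ∈ T.PT := by
      by_contra h
      rw [inducedF, if_neg h] at hsome; simp at hsome
    have huPT : u ∈ T.PT := ObsTable.PT_prefix_closed (List.prefix_append u [a]) hPT
    cases hru : N.runFrom N.q0 u with
    | none =>
        exfalso
        rw [inducedF, if_pos hPT, goF_append N T u [a], hru] at hsome; simp at hsome
    | some r =>
        cases hgu : goF N T N.q0 N.w0 u with
        | none =>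
            exfalso
            rw [inducedF, if_pos hPT, goF_append N T u [a], hru, hgu] at hsome
            simp at hsome
        | some w1 =>
            have hC : ¬ ∃ v ∈ T.PT, (N.runFrom N.q0 v).map Prod.fst = some r.1 ∧
                v ++ [a] ∈ T.PGamma := by
              rintro ⟨v, hvPT, hvfst, hvPG⟩
              refine hno ⟨v, ⟨huPT, hvPT, ?_⟩, hvPG⟩
              rw [hru]
              simp only [Option.map_some]
              exact hvfst.symm
            cases hδ : N.δ r.1 a with
            | none =>
                exfalso
                rw [inducedF, if_pos hPT, goF_append N T u [a], hru, Option.bind_some, hgu,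
                  Option.bind_some, goF_cons, hδ] at hsome
                simp at hsome
            | some x =>
                have hL : inducedF N T (u ++ [a]) = some w1 := by
                  rw [inducedF, if_pos hPT, goF_append N T u [a], hru, Option.bind_some, hgu,
                    Option.bind_some, goF_cons, hδ, Option.bind_some, goF_nil, if_neg hC]
                have hR : inducedF N T u = some w1 := by
                  rw [inducedF, if_pos huPT]; exact hgu
                rw [hL, hR]

lemma inducedMM_size_le [Finite σ] (N : Transducer σ γ) (T : ObsTable σ γ)
    (hN : T.Compatible N) : (inducedMM N T hN).size ≤ N.size := by
  have : Finite N.Q := N.fin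
  set mm := inducedMM N T hN with hmm
  have hdata : ∀ C : ↥mm.classes, ∃ q : N.Q, ∃ u, C.1 = mm.cls u ∧
      (N.runFrom N.q0 u).map Prod.fst = some q ∧ u ∈ T.PT := by
    rintro ⟨C, u, hu, rfl⟩
    have huPT : u ∈ T.PT := mm.f_mem u hu
    have hrs : (N.runFrom N.q0 u).isSome := by
      rw [← inducedF_isSome_iff N T huPT]; exact hu
    obtain ⟨r, hr⟩ := Option.isSome_iff_exists.mp hrs
    exact ⟨r.1, u, rfl, by rw [hr]; rfl, huPT⟩
  choose φ ψ h1 h2 h3 using hdata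
  have hcard : Nat.card ↥mm.classes ≤ Nat.card N.Q := by
    apply Nat.card_le_card_of_injective φ
    intro C C' hCC'
    have hrel : mm.rel (ψ C) (ψ C') := by
      refine ⟨h3 C, h3 C', ?_⟩
      rw [h2 C, h2 C', hCC']
    exact Subtype.ext ((h1 C).trans ((mm.cls_eq_of_rel hrel).trans (h1 C').symm))
  calc mm.size = Nat.card ↥mm.classes := (Nat.card_coe_set_eq mm.classes).symm
    _ ≤ Nat.card N.Q := hcard
    _ = N.size := rfl

end InducedMM

/-- If some open completion of a minimal merging map accepts a
word of `Up` whose run uses a muted or open transition, then there exist two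
competing minimal transducers compatible with `T` (minimal in number of states
among compatible transducers, non-equivalent on `Up`). -/
theorem competing_of_mutedOrOpen_witness {σ γ : Type} [Finite σ] [Finite γ]
    (T : ObsTable σ γ) (m : MergingMap T)
    (hmin : ∀ m' : MergingMap T, m.size ≤ m'.size)
    (h0 : (m.f []).isSome)
    (g : (m.resulting h0).Q → σ → Option ((m.resulting h0).Q))
    (hg : m.ValidOpenChoice h0 g)
    (x : List σ) (hxUp : x ∈ T.Up)
    (hxdom : ((m.openCompletion h0 g).sem x).isSome)
    (huse : m.usesMutedOrOpen h0 g x) :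
    ∃ M1 M2 : Transducer σ γ,
      T.Compatible M1 ∧ T.Compatible M2 ∧
      (∀ N : Transducer σ γ, T.Compatible N → M1.size ≤ N.size) ∧
      (∀ N : Transducer σ γ, T.Compatible N → M2.size ≤ N.size) ∧
      ∃ y ∈ T.Up, M1.sem y ≠ M2.sem y := by
  obtain ⟨vp, a, vs, qx, w, hxsplit, hrunvp, hcase⟩ := huse
  refine ⟨m.openCompletion h0 g, (m.openCompletion h0 g).modifyDelta qx a none,
    MergingMap.compatible_openCompletion m h0 g hg,
    MergingMap.compatible_modify m h0 g hg qx a hcase, ?_, ?_, x, hxUp, ?_⟩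
  · intro Ncand hc
    have e1 : (m.openCompletion h0 g).size = m.size := by
      have e0 : (m.openCompletion h0 g).size = (m.resulting h0).size := rfl
      rw [e0, MergingMap.size_resulting]
    rw [e1]
    exact le_trans (hmin (inducedMM Ncand T hc)) (inducedMM_size_le Ncand T hc)
  · intro Ncand hc
    have e1 : ((m.openCompletion h0 g).modifyDelta qx a none).size = m.size := by
      have e0 : ((m.openCompletion h0 g).modifyDelta qx a none).size =
          (m.resulting h0).size := rfl
      rw [e0, MergingMap.size_resulting]
    rw [e1]
    exact le_trans (hmin (inducedMM Ncand T hc)) (inducedMM_size_le Ncand T hc)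
  · have h2 : ((m.openCompletion h0 g).modifyDelta qx a none).sem x = none := by
      rw [hxsplit, Transducer.sem]
      cases hr2 : ((m.openCompletion h0 g).modifyDelta qx a none).runFrom
          ((m.openCompletion h0 g).modifyDelta qx a none).q0 vp with
      | none =>
          rw [Transducer.runFrom_append_none _ _ hr2]
          rfl
      | some r =>
          have hr1 : (m.openCompletion h0 g).runFrom (m.openCompletion h0 g).q0 vp = some r :=
            MergingMap.runFrom_modifyDelta_none_le (m.openCompletion h0 g) qx a vp _ r hr2
          rw [hrunvp] at hr1
          have hrq : r = (qx, w) := (Option.some_injective _ hr1).symm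
          have hr2' : ((m.openCompletion h0 g).modifyDelta qx a none).runFrom
              ((m.openCompletion h0 g).modifyDelta qx a none).q0 vp = some (qx, w) := by
            rw [hr2, hrq]
            rfl
          have hδ2 : ((m.openCompletion h0 g).modifyDelta qx a none).δ qx a = none := by
            show (if qx = qx ∧ a = a then none else (m.openCompletion h0 g).δ qx a) = none
            rw [if_pos ⟨rfl, rfl⟩]
          erw [Transducer.runFrom_append_some _ _ hr2', Transducer.runFrom_cons, hδ2]
          rfl
    intro heq
    rw [h2] at heq
    rw [heq] at hxdom
    simp at hxdom
end

section
/- Let M1 and M2 be subsequential string transducers over input alphabet Σ and output alphabet Γ, and let A_Up be a DFA over Σ recognizing the language Up. If ⟦M1⟧|_Up ≠ ⟦M2⟧|_Up, then there exists a word u∈Up with |u| ≤ 2·(|M1|·|M2|·|A_Up|)² such that ⟦M1⟧ and ⟦M2⟧ differ on u; that is, u belongs to exactly one of dom(⟦M1⟧) and dom(⟦M2⟧), or u belongs to both domains and ⟦M1⟧(u) ≠ ⟦M2⟧(u). -/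
attribute [local instance] Classical.propDecidable

namespace SmallDiff
open Transducer
variable {σ γ : Type}

lemma runFrom_append (M : Transducer σ γ) (q : M.Q) (u v : List σ) :
    M.runFrom q (u ++ v) = (M.runFrom q u).bind
      fun x => (M.runFrom x.1 v).map fun y => (y.1, x.2 ++ y.2) := by
  induction u generalizing q with
  | nil => simp [Transducer.runFrom]
  | cons a u ih =>
    cases h : M.δ q a with
    | none => simp [Transducer.runFrom, h]
    | some x =>
      simp only [List.cons_append, Transducer.runFrom, h, Option.bind_some]
      rw [ih]
      cases h2 : M.runFrom x.1 u with
      | none => simp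
      | some y =>
        cases h3 : M.runFrom y.1 v <;> simp [h3]

lemma runFrom_append_some {M : Transducer σ γ} {q q' q'' : M.Q} {u v : List σ} {w w' : List γ}
    (h1 : M.runFrom q u = some (q', w)) (h2 : M.runFrom q' v = some (q'', w')) :
    M.runFrom q (u ++ v) = some (q'', w ++ w') := by
  rw [runFrom_append, h1]; simp [h2]

lemma runFrom_append_inv {M : Transducer σ γ} {q : M.Q} {u v : List σ} {r : M.Q × List γ}
    (h : M.runFrom q (u ++ v) = some r) :
    ∃ q' w w', M.runFrom q u = some (q', w) ∧ M.runFrom q' v = some (r.1, w') ∧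
      r.2 = w ++ w' := by
  rw [runFrom_append] at h
  cases h1 : M.runFrom q u with
  | none => rw [h1] at h; simp at h
  | some x =>
    rw [h1] at h
    cases h2 : M.runFrom x.1 v with
    | none => rw [Option.bind_some, h2] at h; simp at h
    | some y =>
      rw [Option.bind_some, h2] at h
      simp only [Option.map_some] at h
      obtain rfl : r = (y.1, x.2 ++ y.2) := (Option.some.inj h).symm
      exact ⟨x.1, x.2, y.2, by simp [h1], by simp [h2], rfl⟩

lemma sem_intro {M : Transducer σ γ} {u : List σ} {q : M.Q} {w f : List γ}
    (h : M.runFrom M.q0 u = some (q, w)) (hf : M.δF q = some f) :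
    M.sem u = some (M.w0 ++ w ++ f) := by
  simp [Transducer.sem, h, hf]

lemma sem_none_of_run_none {M : Transducer σ γ} {u : List σ}
    (h : M.runFrom M.q0 u = none) : M.sem u = none := by
  simp [Transducer.sem, h]

lemma sem_none_of_final_none {M : Transducer σ γ} {u : List σ} {q : M.Q} {w : List γ}
    (h : M.runFrom M.q0 u = some (q, w)) (hf : M.δF q = none) : M.sem u = none := by
  simp [Transducer.sem, h, hf]

lemma sem_some_elim {M : Transducer σ γ} {u : List σ} {r : List γ}
    (h : M.sem u = some r) :
    ∃ q w f, M.runFrom M.q0 u = some (q, w) ∧ M.δF q = some f ∧ r = M.w0 ++ w ++ f := by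
  unfold Transducer.sem at h
  cases h1 : M.runFrom M.q0 u with
  | none => rw [h1] at h; simp at h
  | some x =>
    rw [h1] at h
    cases h2 : M.δF x.1 with
    | none => rw [Option.bind_some, h2] at h; simp at h
    | some f =>
      rw [Option.bind_some, h2] at h
      simp only [Option.map_some] at h
      obtain rfl : r = M.w0 ++ x.2 ++ f := (Option.some.inj h).symm
      exact ⟨x.1, x.2, f, by simp [h1], h2, rfl⟩

lemma take_add_seg (u : List σ) {i j : ℕ} (h : i ≤ j) :
    u.take i ++ (u.take j).drop i = u.take j := by
  conv_rhs => rw [← List.take_append_drop i (u.take j)]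
  rw [List.take_take, min_eq_left h]

lemma run_seg {M : Transducer σ γ} {q0 : M.Q} {u : List σ} {i j : ℕ} (hij : i ≤ j)
    {qi qj : M.Q} {wi wj : List γ}
    (hi : M.runFrom q0 (u.take i) = some (qi, wi))
    (hj : M.runFrom q0 (u.take j) = some (qj, wj)) :
    ∃ wm, M.runFrom qi ((u.take j).drop i) = some (qj, wm) ∧ wj = wi ++ wm := by
  rw [← take_add_seg u hij] at hj
  obtain ⟨q', w, w', h1, h2, h3⟩ := runFrom_append_inv hj
  rw [hi] at h1
  obtain ⟨rfl, rfl⟩ : q' = qi ∧ w = wi := by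
    injection h1 with h1; exact ⟨congrArg Prod.fst h1.symm, congrArg Prod.snd h1.symm⟩
  exact ⟨w', h2, h3⟩

lemma pigeon {S : Type} [Fintype S] (f : ℕ → S) (a : ℕ) :
    ∃ i j, a ≤ i ∧ i < j ∧ j ≤ a + Fintype.card S ∧ f i = f j := by
  obtain ⟨x, y, hxy, hf⟩ := Fintype.exists_ne_map_eq_of_card_lt
    (fun k : Fin (Fintype.card S + 1) => f (a + k)) (by simp)
  rcases hxy.lt_or_gt with h | h
  · exact ⟨a + x, a + y, Nat.le_add_right _ _, by omega, by have := y.isLt; omega, hf⟩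
  · exact ⟨a + y, a + x, Nat.le_add_right _ _, by omega, by have := x.isLt; omega, hf.symm⟩

lemma word_aux {α : Type} (A0 g1 A1 g2 A2 B0 h1 B1 h2 B2 : List α)
    (hlen : B0.length ≤ A0.length)
    (e1 : A0 ++ A1 ++ g2 ++ A2 = B0 ++ B1 ++ h2 ++ B2)
    (e2 : A0 ++ g1 ++ A1 ++ A2 = B0 ++ h1 ++ B1 ++ B2)
    (e3 : A0 ++ A1 ++ A2 = B0 ++ B1 ++ B2) :
    A0 ++ g1 ++ A1 ++ g2 ++ A2 = B0 ++ h1 ++ B1 ++ h2 ++ B2 := by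
  have hpre : B0 <+: A0 := by
    refine List.prefix_of_prefix_length_le (l₃ := A0 ++ (A1 ++ A2)) ?_ ?_ hlen
    · rw [show A0 ++ (A1 ++ A2) = B0 ++ (B1 ++ B2) by simpa [List.append_assoc] using e3]
      exact List.prefix_append _ _
    · exact List.prefix_append _ _
  obtain ⟨t, rfl⟩ := hpre
  have e3' : t ++ (A1 ++ A2) = B1 ++ B2 :=
    List.append_cancel_left (as := B0) (by simpa [List.append_assoc] using e3)
  have e2' : t ++ (g1 ++ (A1 ++ A2)) = h1 ++ (B1 ++ B2) :=
    List.append_cancel_left (as := B0) (by simpa [List.append_assoc] using e2)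
  rw [← e3'] at e2'
  have conj : t ++ g1 = h1 ++ t :=
    List.append_cancel_right (bs := A1 ++ A2) (by simpa [List.append_assoc] using e2')
  have e1' : t ++ (A1 ++ (g2 ++ A2)) = B1 ++ (h2 ++ B2) :=
    List.append_cancel_left (as := B0) (by simpa [List.append_assoc] using e1)
  have key : t ++ (g1 ++ (A1 ++ (g2 ++ A2))) = h1 ++ (B1 ++ (h2 ++ B2)) := by
    rw [← e1', ← List.append_assoc t g1, conj, List.append_assoc]
  simpa [List.append_assoc] using congrArg (fun z => (B0 : List α) ++ z) key

lemma word_lemma {α : Type} (A0 g1 A1 g2 A2 B0 h1 B1 h2 B2 : List α)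
    (e1 : A0 ++ A1 ++ g2 ++ A2 = B0 ++ B1 ++ h2 ++ B2)
    (e2 : A0 ++ g1 ++ A1 ++ A2 = B0 ++ h1 ++ B1 ++ B2)
    (e3 : A0 ++ A1 ++ A2 = B0 ++ B1 ++ B2) :
    A0 ++ g1 ++ A1 ++ g2 ++ A2 = B0 ++ h1 ++ B1 ++ h2 ++ B2 := by
  rcases le_total B0.length A0.length with h | h
  · exact word_aux A0 g1 A1 g2 A2 B0 h1 B1 h2 B2 h e1 e2 e3
  · exact (word_aux B0 h1 B1 h2 B2 A0 g1 A1 g2 A2 h e1.symm e2.symm e3.symm).symm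

lemma run_isSome_take {M : Transducer σ γ} {q : M.Q} {u : List σ}
    (h : (M.runFrom q u).isSome) (i : ℕ) : (M.runFrom q (u.take i)).isSome := by
  rw [← List.take_append_drop i u, runFrom_append] at h
  cases hx : M.runFrom q (u.take i) with
  | none => rw [hx] at h; simp at h
  | some x => simp

/-- The state of `M` after reading `u.take i`, with default `M.q0` when undefined. -/
noncomputable def stAt (M : Transducer σ γ) (u : List σ) (i : ℕ) : M.Q :=
  ((M.runFrom M.q0 (u.take i)).map Prod.fst).getD M.q0

lemma stAt_eq {M : Transducer σ γ} {u : List σ} {i : ℕ} {q : M.Q} {w : List γ}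
    (h : M.runFrom M.q0 (u.take i) = some (q, w)) : stAt M u i = q := by
  simp [stAt, h]

lemma run_at {M : Transducer σ γ} {u : List σ} {r : M.Q × List γ}
    (h : M.runFrom M.q0 u = some r) (i : ℕ) :
    ∃ w, M.runFrom M.q0 (u.take i) = some (stAt M u i, w) := by
  have hs : (M.runFrom M.q0 (u.take i)).isSome := run_isSome_take (by simp [h]) i
  obtain ⟨x, hx⟩ := Option.isSome_iff_exists.mp hs
  exact ⟨x.2, by rw [hx, stAt_eq (q := x.1) (w := x.2) (by rw [hx])]⟩

lemma run_drop {M : Transducer σ γ} {u : List σ} {j : ℕ} {p qf : M.Q} {wj wf : List γ}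
    (hfull : M.runFrom M.q0 u = some (qf, wf))
    (hj : M.runFrom M.q0 (u.take j) = some (p, wj)) (hjn : j ≤ u.length) :
    ∃ ws, M.runFrom p (u.drop j) = some (qf, ws) ∧ wf = wj ++ ws := by
  have := run_seg (u := u) (i := j) (j := u.length) (by omega) hj
    (by rwa [List.take_length])
  rwa [List.take_length] at this

lemma run_tail_none {M : Transducer σ γ} {u : List σ} {j : ℕ} {p : M.Q} {wj : List γ}
    (hfull : M.runFrom M.q0 u = none)
    (hj : M.runFrom M.q0 (u.take j) = some (p, wj)) :
    M.runFrom p (u.drop j) = none := by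
  rw [← List.take_append_drop j u, runFrom_append, hj] at hfull
  simp only [Option.bind_some] at hfull
  cases hx : M.runFrom p (u.drop j) with
  | none => rfl
  | some x => rw [hx] at hfull; simp at hfull

lemma run_none_prefix {M : Transducer σ γ} {v : List σ} {m : ℕ}
    (h : M.runFrom M.q0 (v.take m) = none) : M.runFrom M.q0 v = none := by
  rw [← List.take_append_drop m v, runFrom_append, h]; rfl

/-- The state of the DFA after reading `u.take i`. -/
def aAt {QA : Type} (A : DFA σ QA) (u : List σ) (i : ℕ) : QA :=
  A.evalFrom A.start (u.take i)

lemma dfa_seg {QA : Type} (A : DFA σ QA) (u : List σ) {i j : ℕ} (hij : i ≤ j) :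
    A.evalFrom (aAt A u i) ((u.take j).drop i) = aAt A u j := by
  rw [aAt, aAt, ← DFA.evalFrom_of_append, take_add_seg u hij]

lemma dfa_drop {QA : Type} (A : DFA σ QA) (u : List σ) (j : ℕ) :
    A.evalFrom (aAt A u j) (u.drop j) = A.evalFrom A.start u := by
  rw [aAt, ← DFA.evalFrom_of_append, List.take_append_drop]

lemma del_witness {QA : Type} [Finite QA] {M1 M2 : Transducer σ γ} {A : DFA σ QA}
    {u : List σ} (hu : u ∈ A.accepts)
    {qf2 : M2.Q} {wr2 f2 : List γ}
    (hrun2 : M2.runFrom M2.q0 u = some (qf2, wr2)) (hF2 : M2.δF qf2 = some f2)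
    (hmin : ∀ v ∈ A.accepts, M1.sem v ≠ M2.sem v → u.length ≤ v.length)
    {i j : ℕ} (hij : i < j) (hjn : j ≤ u.length)
    (haij : aAt A u i = aAt A u j)
    (h2ij : stAt M2 u i = stAt M2 u j)
    (hsem1 : M1.sem (u.take i ++ u.drop j) = none) : False := by
  set v := u.take i ++ u.drop j with hv
  obtain ⟨wi, hwi⟩ := run_at hrun2 i
  obtain ⟨wj, hwj⟩ := run_at hrun2 j
  obtain ⟨ws, hws, -⟩ := run_drop hrun2 hwj hjn
  rw [h2ij] at hwi
  have hrun2v : M2.runFrom M2.q0 v = some (qf2, wi ++ ws) := runFrom_append_some hwi hws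
  have hsem2v := sem_intro hrun2v hF2
  have haccv : v ∈ A.accepts := by
    rw [DFA.mem_accepts] at hu ⊢
    show A.evalFrom A.start (u.take i ++ u.drop j) ∈ A.accept
    rw [DFA.evalFrom_of_append]
    show A.evalFrom (aAt A u i) _ ∈ _
    rw [haij, dfa_drop]
    exact hu
  have hlv : v.length < u.length := by
    rw [hv, List.length_append, List.length_take, List.length_drop]
    omega
  have := hmin v haccv (by rw [hsem1, hsem2v]; simp)
  omega

lemma caseA {QA : Type} [Finite QA] (M1 M2 : Transducer σ γ) (A : DFA σ QA)
    (u : List σ) (hu : u ∈ A.accepts)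
    (hs1 : M1.sem u = none) (hs2 : (M2.sem u).isSome)
    (hlen : 2 * (M1.size * M2.size * Nat.card QA) ≤ u.length)
    (hmin : ∀ v ∈ A.accepts, M1.sem v ≠ M2.sem v → u.length ≤ v.length) : False := by
  classical
  letI : Fintype M1.Q := @Fintype.ofFinite _ M1.fin
  letI : Fintype M2.Q := @Fintype.ofFinite _ M2.fin
  letI : Fintype QA := Fintype.ofFinite QA
  set N := M1.size * M2.size * Nat.card QA with hN
  have hsz1 : M1.size = Fintype.card M1.Q := Nat.card_eq_fintype_card
  have hsz2 : M2.size = Fintype.card M2.Q := Nat.card_eq_fintype_card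
  have hszA : Nat.card QA = Fintype.card QA := Nat.card_eq_fintype_card
  have c1 : 0 < Fintype.card M1.Q := @Fintype.card_pos _ _ ⟨M1.q0⟩
  have c2 : 0 < Fintype.card M2.Q := @Fintype.card_pos _ _ ⟨M2.q0⟩
  have c3 : 0 < Fintype.card QA := @Fintype.card_pos _ _ ⟨A.start⟩
  have hN1 : 1 ≤ N := by
    rw [hN, hsz1, hsz2, hszA]
    exact Nat.succ_le_of_lt (Nat.mul_pos (Nat.mul_pos c1 c2) c3)
  have hcard3 : Fintype.card (M1.Q × M2.Q × QA) = N := by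
    rw [hN, hsz1, hsz2, hszA]; simp [mul_assoc]
  have hcard2 : Fintype.card (M2.Q × QA) ≤ N := by
    rw [hN, hsz1, hsz2, hszA, Fintype.card_prod, mul_assoc]
    exact Nat.le_mul_of_pos_left _ c1
  obtain ⟨w2, hw2⟩ := Option.isSome_iff_exists.mp hs2
  obtain ⟨qf2, wr2, f2, hrun2, hF2, -⟩ := sem_some_elim hw2
  cases hr1 : M1.runFrom M1.q0 u with
  | some r1 =>
    -- the run of M1 survives but the final output is undefined
    have hδF1 : M1.δF r1.1 = none := by
      have h := hs1
      unfold Transducer.sem at h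
      rw [hr1, Option.bind_some] at h
      cases hF : M1.δF r1.1 with
      | none => rfl
      | some f => rw [hF] at h; simp at h
    obtain ⟨i, j, -, hij, hjb, hfeq⟩ :=
      pigeon (fun i => (stAt M1 u i, stAt M2 u i, aAt A u i)) 0
    rw [hcard3] at hjb
    have hjn : j ≤ u.length := by omega
    have h1ij : stAt M1 u i = stAt M1 u j := congrArg (fun x => x.1) hfeq
    have h2ij : stAt M2 u i = stAt M2 u j := congrArg (fun x => x.2.1) hfeq
    have haij : aAt A u i = aAt A u j := congrArg (fun x => x.2.2) hfeq
    have hr1' : M1.runFrom M1.q0 u = some (r1.1, r1.2) := by rw [hr1]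
    obtain ⟨wi, hwi⟩ := run_at hr1' i
    obtain ⟨wj, hwj⟩ := run_at hr1' j
    obtain ⟨ws, hws, -⟩ := run_drop hr1' hwj hjn
    rw [h1ij] at hwi
    have hrun1v : M1.runFrom M1.q0 (u.take i ++ u.drop j) = some (r1.1, wi ++ ws) :=
      runFrom_append_some hwi hws
    exact del_witness hu hrun2 hF2 hmin hij hjn haij h2ij
      (sem_none_of_final_none hrun1v hδF1)
  | none =>
    -- the run of M1 dies
    have hex : ∃ m, M1.runFrom M1.q0 (u.take m) = none :=
      ⟨u.length, by rwa [List.take_length]⟩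
    set k' := Nat.find hex with hk'
    have hk'spec : M1.runFrom M1.q0 (u.take k') = none := Nat.find_spec hex
    have hk'le : k' ≤ u.length := Nat.find_min' hex (by rwa [List.take_length])
    have hk'pos : k' ≠ 0 := by
      intro h0
      rw [h0] at hk'spec
      simp [Transducer.runFrom] at hk'spec
    set k := k' - 1 with hkdef
    have hkk' : k < k' := by omega
    have hkalive : M1.runFrom M1.q0 (u.take k) ≠ none := Nat.find_min hex hkk'
    obtain ⟨pk, hpk⟩ : ∃ x, M1.runFrom M1.q0 (u.take k) = some x :=
      Option.ne_none_iff_exists'.mp hkalive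
    by_cases hNk : N ≤ k
    · -- loop among live triples
      obtain ⟨i, j, -, hij, hjb, hfeq⟩ :=
        pigeon (fun i => (stAt M1 u i, stAt M2 u i, aAt A u i)) 0
      rw [hcard3] at hjb
      have hjk : j ≤ k := by omega
      have hjn : j ≤ u.length := by omega
      have h1ij : stAt M1 u i = stAt M1 u j := congrArg (fun x => x.1) hfeq
      have h2ij : stAt M2 u i = stAt M2 u j := congrArg (fun x => x.2.1) hfeq
      have haij : aAt A u i = aAt A u j := congrArg (fun x => x.2.2) hfeq
      -- M1's run is alive at i and j
      have haliveTake : ∀ m, m ≤ k → ∃ x, M1.runFrom M1.q0 (u.take m) = some x := by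
        intro m hm
        have hs : (M1.runFrom M1.q0 ((u.take k).take m)).isSome :=
          run_isSome_take (by simp [hpk]) m
        rw [List.take_take, min_eq_left hm] at hs
        exact Option.isSome_iff_exists.mp hs
      obtain ⟨xi, hxi⟩ := haliveTake i (by omega)
      obtain ⟨xj, hxj⟩ := haliveTake j hjk
      have hxi' : M1.runFrom M1.q0 (u.take i) = some (stAt M1 u i, xi.2) := by
        rw [hxi, stAt_eq (q := xi.1) (w := xi.2) (by rw [hxi])]
      have hxj' : M1.runFrom M1.q0 (u.take j) = some (stAt M1 u j, xj.2) := by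
        rw [hxj, stAt_eq (q := xj.1) (w := xj.2) (by rw [hxj])]
      have htail : M1.runFrom (stAt M1 u j) (u.drop j) = none := run_tail_none hr1 hxj'
      rw [h1ij] at hxi'
      have hrun1v : M1.runFrom M1.q0 (u.take i ++ u.drop j) = none := by
        rw [runFrom_append, hxi', Option.bind_some, htail]; rfl
      exact del_witness hu hrun2 hF2 hmin hij hjn haij h2ij (sem_none_of_run_none hrun1v)
    · -- loop among dead pairs
      obtain ⟨i, j, hia, hij, hjb, hfeq⟩ :=
        pigeon (fun i => (stAt M2 u i, aAt A u i)) (k + 1)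
      have hjn : j ≤ u.length := by omega
      have h2ij : stAt M2 u i = stAt M2 u j := congrArg (fun x => x.1) hfeq
      have haij : aAt A u i = aAt A u j := congrArg (fun x => x.2) hfeq
      have hk1 : M1.runFrom M1.q0 (u.take (k + 1)) = none := by
        have : k + 1 = k' := by omega
        rw [this]; exact hk'spec
      have htk : (u.take i ++ u.drop j).take (k + 1) = u.take (k + 1) := by
        rw [List.take_append_of_le_length, List.take_take, min_eq_left (by omega)]
        rw [List.length_take]; omega
      have hrun1v : M1.runFrom M1.q0 (u.take i ++ u.drop j) = none :=
        run_none_prefix (by rw [htk]; exact hk1)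
      exact del_witness hu hrun2 hF2 hmin hij hjn haij h2ij (sem_none_of_run_none hrun1v)

lemma caseB {QA : Type} [Finite QA] (M1 M2 : Transducer σ γ) (A : DFA σ QA)
    (u : List σ) (hu : u ∈ A.accepts)
    {w1 w2 : List γ} (hs1 : M1.sem u = some w1) (hs2 : M2.sem u = some w2)
    (hne : M1.sem u ≠ M2.sem u)
    (hlen : 2 * (M1.size * M2.size * Nat.card QA) ≤ u.length)
    (hmin : ∀ v ∈ A.accepts, M1.sem v ≠ M2.sem v → u.length ≤ v.length) : False := by
  classical
  letI : Fintype M1.Q := @Fintype.ofFinite _ M1.fin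
  letI : Fintype M2.Q := @Fintype.ofFinite _ M2.fin
  letI : Fintype QA := Fintype.ofFinite QA
  set N := M1.size * M2.size * Nat.card QA with hN
  have hsz1 : M1.size = Fintype.card M1.Q := Nat.card_eq_fintype_card
  have hsz2 : M2.size = Fintype.card M2.Q := Nat.card_eq_fintype_card
  have hszA : Nat.card QA = Fintype.card QA := Nat.card_eq_fintype_card
  have hcard3 : Fintype.card (M1.Q × M2.Q × QA) = N := by
    rw [hN, hsz1, hsz2, hszA]; simp [mul_assoc]
  obtain ⟨qf1, wr1, f1, hrun1, hF1, hw1⟩ := sem_some_elim hs1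
  obtain ⟨qf2, wr2, f2, hrun2, hF2, hw2⟩ := sem_some_elim hs2
  -- two disjoint loops
  obtain ⟨i1, j1, -, hij1, hj1, heq1⟩ :=
    pigeon (fun i => (stAt M1 u i, stAt M2 u i, aAt A u i)) 0
  obtain ⟨i2, j2, hi2, hij2, hj2, heq2⟩ :=
    pigeon (fun i => (stAt M1 u i, stAt M2 u i, aAt A u i)) N
  rw [hcard3] at hj1 hj2
  have hj1i2 : j1 ≤ i2 := by omega
  have hj2n : j2 ≤ u.length := by omega
  have e11 : stAt M1 u i1 = stAt M1 u j1 := congrArg (fun x => x.1) heq1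
  have e21 : stAt M2 u i1 = stAt M2 u j1 := congrArg (fun x => x.2.1) heq1
  have ea1 : aAt A u i1 = aAt A u j1 := congrArg (fun x => x.2.2) heq1
  have e12 : stAt M1 u i2 = stAt M1 u j2 := congrArg (fun x => x.1) heq2
  have e22 : stAt M2 u i2 = stAt M2 u j2 := congrArg (fun x => x.2.1) heq2
  have ea2 : aAt A u i2 = aAt A u j2 := congrArg (fun x => x.2.2) heq2
  -- segments
  set t1 := u.take i1 with ht1
  set t2 := (u.take j1).drop i1 with ht2
  set t3 := (u.take i2).drop j1 with ht3
  set t4 := (u.take j2).drop i2 with ht4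
  set t5 := u.drop j2 with ht5
  -- M1 segment runs
  obtain ⟨x0, hx0⟩ := run_at hrun1 i1
  obtain ⟨x1, hx1⟩ := run_at hrun1 j1
  obtain ⟨x2, hx2⟩ := run_at hrun1 i2
  obtain ⟨x3, hx3⟩ := run_at hrun1 j2
  obtain ⟨g1, hg1, hc1⟩ := run_seg (le_of_lt hij1) hx0 hx1
  obtain ⟨a1, ha1, hc2⟩ := run_seg hj1i2 hx1 hx2
  obtain ⟨g2, hg2, hc3⟩ := run_seg (le_of_lt hij2) hx2 hx3
  obtain ⟨a2, ha2, hc4⟩ := run_drop hrun1 hx3 hj2n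
  rw [← e11] at hg1 ha1
  rw [← e12] at hg2 ha2
  -- M2 segment runs
  obtain ⟨y0, hy0⟩ := run_at hrun2 i1
  obtain ⟨y1, hy1⟩ := run_at hrun2 j1
  obtain ⟨y2, hy2⟩ := run_at hrun2 i2
  obtain ⟨y3, hy3⟩ := run_at hrun2 j2
  obtain ⟨k1, hk1, hd1⟩ := run_seg (le_of_lt hij1) hy0 hy1
  obtain ⟨b1, hb1, hd2⟩ := run_seg hj1i2 hy1 hy2
  obtain ⟨k2, hk2, hd3⟩ := run_seg (le_of_lt hij2) hy2 hy3
  obtain ⟨b2, hb2, hd4⟩ := run_drop hrun2 hy3 hj2n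
  rw [← e21] at hk1 hb1
  rw [← e22] at hk2 hb2
  -- the three deleted words
  set v1 := t1 ++ (t3 ++ (t4 ++ t5)) with hv1
  set v2 := t1 ++ (t2 ++ (t3 ++ t5)) with hv2
  set v3 := t1 ++ (t3 ++ t5) with hv3
  -- their runs
  have hrunv1 : M1.runFrom M1.q0 v1 = some (qf1, x0 ++ (a1 ++ (g2 ++ a2))) :=
    runFrom_append_some hx0 (runFrom_append_some ha1 (runFrom_append_some hg2 ha2))
  have hrunv2 : M1.runFrom M1.q0 v2 = some (qf1, x0 ++ (g1 ++ (a1 ++ a2))) := by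
    exact runFrom_append_some hx0 (runFrom_append_some hg1 (runFrom_append_some ha1 ha2))
  have hrunv3 : M1.runFrom M1.q0 v3 = some (qf1, x0 ++ (a1 ++ a2)) := by
    exact runFrom_append_some hx0 (runFrom_append_some ha1 ha2)
  have hrunw1 : M2.runFrom M2.q0 v1 = some (qf2, y0 ++ (b1 ++ (k2 ++ b2))) :=
    runFrom_append_some hy0 (runFrom_append_some hb1 (runFrom_append_some hk2 hb2))
  have hrunw2 : M2.runFrom M2.q0 v2 = some (qf2, y0 ++ (k1 ++ (b1 ++ b2))) := by
    exact runFrom_append_some hy0 (runFrom_append_some hk1 (runFrom_append_some hb1 hb2))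
  have hrunw3 : M2.runFrom M2.q0 v3 = some (qf2, y0 ++ (b1 ++ b2)) := by
    exact runFrom_append_some hy0 (runFrom_append_some hb1 hb2)
  -- acceptance of the deleted words
  have hacc : ∀ v : List σ, A.evalFrom A.start v = A.evalFrom A.start u → v ∈ A.accepts := by
    intro v hv
    rw [DFA.mem_accepts] at hu ⊢
    show A.evalFrom A.start v ∈ A.accept
    rw [hv]; exact hu
  have hA1 : A.evalFrom A.start t1 = aAt A u i1 := rfl
  have hAv1 : v1 ∈ A.accepts := by
    refine hacc _ ?_
    rw [hv1, DFA.evalFrom_of_append, DFA.evalFrom_of_append, DFA.evalFrom_of_append,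
      hA1, ea1, ht3, dfa_seg A u hj1i2, ht4, dfa_seg A u (le_of_lt hij2), ht5, dfa_drop]
  have hAv2 : v2 ∈ A.accepts := by
    refine hacc _ ?_
    rw [hv2, DFA.evalFrom_of_append, DFA.evalFrom_of_append, DFA.evalFrom_of_append,
      hA1, ht2, dfa_seg A u (le_of_lt hij1), ht3, dfa_seg A u hj1i2, ea2, ht5, dfa_drop]
  have hAv3 : v3 ∈ A.accepts := by
    refine hacc _ ?_
    rw [hv3, DFA.evalFrom_of_append, DFA.evalFrom_of_append,
      hA1, ea1, ht3, dfa_seg A u hj1i2, ea2, ht5, dfa_drop]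
  -- lengths
  have hlt1 : t1.length = i1 := by rw [ht1, List.length_take]; omega
  have hlt2 : t2.length = j1 - i1 := by rw [ht2, List.length_drop, List.length_take]; omega
  have hlt3 : t3.length = i2 - j1 := by rw [ht3, List.length_drop, List.length_take]; omega
  have hlt4 : t4.length = j2 - i2 := by rw [ht4, List.length_drop, List.length_take]; omega
  have hlt5 : t5.length = u.length - j2 := by rw [ht5, List.length_drop]
  have hL1 : v1.length < u.length := by
    rw [hv1]; simp only [List.length_append]; omega
  have hL2 : v2.length < u.length := by
    rw [hv2]; simp only [List.length_append]; omega
  have hL3 : v3.length < u.length := by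
    rw [hv3]; simp only [List.length_append]; omega
  -- the deleted words are not witnesses
  have hE1 : M1.sem v1 = M2.sem v1 := by
    by_contra hc; exact absurd (hmin v1 hAv1 hc) (by omega)
  have hE2 : M1.sem v2 = M2.sem v2 := by
    by_contra hc; exact absurd (hmin v2 hAv2 hc) (by omega)
  have hE3 : M1.sem v3 = M2.sem v3 := by
    by_contra hc; exact absurd (hmin v3 hAv3 hc) (by omega)
  rw [sem_intro hrunv1 hF1, sem_intro hrunw1 hF2] at hE1
  rw [sem_intro hrunv2 hF1, sem_intro hrunw2 hF2] at hE2
  rw [sem_intro hrunv3 hF1, sem_intro hrunw3 hF2] at hE3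
  have p1 := Option.some.inj hE1
  have p2 := Option.some.inj hE2
  have p3 := Option.some.inj hE3
  -- apply the word-combinatorics lemma
  have key := word_lemma (M1.w0 ++ x0) g1 a1 g2 (a2 ++ f1)
    (M2.w0 ++ y0) k1 b1 k2 (b2 ++ f2)
    (by simpa [List.append_assoc] using p1)
    (by simpa [List.append_assoc] using p2)
    (by simpa [List.append_assoc] using p3)
  apply hne
  rw [hs1, hs2, hw1, hw2, hc4, hc3, hc2, hc1, hd4, hd3, hd2, hd1]
  exact congrArg some (by simpa [List.append_assoc] using key)

end SmallDiff

open SmallDiff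

/-- If `⟦M1⟧` and `⟦M2⟧` differ somewhere on `Up = L(A_Up)`, then
they differ on a word `u ∈ Up` with `|u| ≤ 2·(|M1|·|M2|·|A_Up|)²`. -/
theorem small_difference_witness {σ γ QA : Type} [Finite σ] [Finite γ] [Finite QA]
    (M1 M2 : Transducer σ γ) (A : DFA σ QA)
    (h : ∃ y ∈ A.accepts, M1.sem y ≠ M2.sem y) :
    ∃ u ∈ A.accepts,
      u.length ≤ 2 * (M1.size * M2.size * Nat.card QA) ^ 2 ∧
      (((M1.sem u).isSome ∧ M2.sem u = none) ∨
       (M1.sem u = none ∧ (M2.sem u).isSome) ∨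
       (∃ w1 w2 : List γ, M1.sem u = some w1 ∧ M2.sem u = some w2 ∧ w1 ≠ w2)) := by
  
  classical
  obtain ⟨y, hy, hys⟩ := h
  set N := M1.size * M2.size * Nat.card QA with hN
  have hN1 : 1 ≤ N := by
    have c1 : 0 < M1.size := @Nat.card_pos _ ⟨M1.q0⟩ M1.fin
    have c2 : 0 < M2.size := @Nat.card_pos _ ⟨M2.q0⟩ M2.fin
    have c3 : 0 < Nat.card QA := @Nat.card_pos _ ⟨A.start⟩ _
    rw [hN]
    exact Nat.succ_le_of_lt (Nat.mul_pos (Nat.mul_pos c1 c2) c3)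
  have hW : ∃ m, ∃ v : List σ, v.length = m ∧ v ∈ A.accepts ∧ M1.sem v ≠ M2.sem v :=
    ⟨y.length, y, rfl, hy, hys⟩
  obtain ⟨u, hul, huA, hune⟩ := Nat.find_spec hW
  have hmin : ∀ v ∈ A.accepts, M1.sem v ≠ M2.sem v → u.length ≤ v.length := by
    intro v hv hnev
    rw [hul]
    exact Nat.find_le ⟨v, rfl, hv, hnev⟩
  have hshort : ¬ 2 * N ≤ u.length := by
    intro hlen
    rcases h1 : M1.sem u with _ | w1 <;> rcases h2 : M2.sem u with _ | w2
    · exact hune (h1.trans h2.symm)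
    · exact caseA M1 M2 A u huA h1 (by simp [h2]) hlen hmin
    · refine caseA M2 M1 A u huA h2 (by simp [h1]) ?_ ?_
      · rw [show M2.size * M1.size * Nat.card QA = N by rw [hN]; ring]
        exact hlen
      · exact fun v hv hnev => hmin v hv hnev.symm
    · exact caseB M1 M2 A u huA h1 h2 hune hlen hmin
  refine ⟨u, huA, ?_, ?_⟩
  · have hNN : N ≤ N ^ 2 := by nlinarith
    omega
  · rcases h1 : M1.sem u with _ | w1 <;> rcases h2 : M2.sem u with _ | w2
    · exact absurd (h1.trans h2.symm) hune
    · exact Or.inr (Or.inl ⟨rfl, rfl⟩)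
    · exact Or.inl ⟨rfl, rfl⟩
    · exact Or.inr (Or.inr ⟨w1, w2, rfl, rfl, fun hww => hune (by rw [h1, h2, hww])⟩)
end
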